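/- arXiv:2209.00938 — 3 statements merged into one kernel-verified Lean document; each statement's English description precedes it below -/
import Mathlib

section
/- For each real m ≥ 0 and all integers ξ ≥ 0, η ≥ 1: a₁(ξ−η+1, ξ+η+1, m, 1, u₁) = (−1)^{ξ+1} · m · (1+m²)^{δ₂((1+η)ξ)} · (1+m²)^{−(ξ+η)/2} · C(⌊ξ/2⌋+⌊(η−1)/2⌋, ⌊ξ/2⌋) · ₂F₁( −⌊(η−1)/2⌋, −⌊ξ/2⌋; −⌊ξ/2⌋−⌊(η−1)/2⌋; (1+m²)² ). -/
open scoped BigOperators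

/-- Direction of a checker move encoded by a Boolean: `true` = upwards-right
(vector `(ε,ε)`), `false` = upwards-left (vector `(-ε,ε)`). -/
def dirZ (b : Bool) : ℤ := if b then 1 else -1

/-- The `k`-th direction of a path with `n` moves (dummy value `false` out of range). -/
def extd {n : ℕ} (d : Fin n → Bool) (k : ℕ) : Bool := if h : k < n then d ⟨k, h⟩ else false

/-- The (integer) space coordinate of a checker path after `k` moves. -/
def pathPos {n : ℕ} (d : Fin n → Bool) (k : ℕ) : ℤ := ∑ i ∈ Finset.range k, dirZ (extd d i)

/-- The number of turns of a checker path. -/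
def pathTurns {n : ℕ} (d : Fin n → Bool) : ℕ :=
  ((Finset.range n).filter (fun k => 0 < k ∧ extd d (k - 1) ≠ extd d k)).card

/-- Feynman checkers wave function `a(x,t,m,ε,u)` in an external field `u`, where the field
`u` is given as a function of the midpoint of an auxiliary edge. -/
noncomputable def kwf (m ε : ℝ) (u : ℝ → ℝ → ℝ) (x t : ℝ) : ℂ :=
  (((1 + m ^ 2 * ε ^ 2) ^ ((1 - t / ε) / 2) : ℝ) : ℂ) * Complex.I *
    ∑ d ∈ Finset.univ.filter
        (fun d : Fin ((⌊t / ε⌋).toNat) → Bool =>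
          extd d 0 = true ∧ pathPos d ((⌊t / ε⌋).toNat) = ⌊x / ε⌋),
      (-(Complex.I) * (m * ε)) ^ (pathTurns d) *
        ∏ k ∈ Finset.range ((⌊t / ε⌋).toNat),
          ((u (ε * pathPos d k + ε * (dirZ (extd d k)) / 2) (ε * k + ε / 2) : ℝ) : ℂ)

/-- `a₁(x,t,m,ε,u)`: the real part of the wave function. -/
noncomputable def ka1 (m ε : ℝ) (u : ℝ → ℝ → ℝ) (x t : ℝ) : ℝ := (kwf m ε u x t).re

/-- `a₂(x,t,m,ε,u)`: the imaginary part of the wave function. -/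
noncomputable def ka2 (m ε : ℝ) (u : ℝ → ℝ → ℝ) (x t : ℝ) : ℝ := (kwf m ε u x t).im

/-- `P(x,t,m,ε,u)`: the probability to find the electron at `(x,t)`. -/
noncomputable def kP (m ε : ℝ) (u : ℝ → ℝ → ℝ) (x t : ℝ) : ℝ := ‖kwf m ε u x t‖ ^ 2

/- The homogeneous electromagnetic field `u_ε`, as a function of the midpoint `(X,T)`
of an auxiliary edge: for `(x,t) ∈ εℤ²`, `u_ε(x+ε/2, t+ε/2) = -1` iff `(t-x)/(4ε) ∈ ℤ`. -/
open Classical in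
noncomputable def uhom (ε : ℝ) : ℝ → ℝ → ℝ := fun X T =>
  if ∃ k : ℤ, T - X = 4 * ε * k then -1 else 1
/-- Extended binomial coefficient: `C(a,b) = 0` if `a < 0` or `b < 0`. -/
def zchoose (a b : ℤ) : ℤ := if 0 ≤ a ∧ 0 ≤ b then (a.toNat).choose (b.toNat) else 0

/-- Bessel function of the first kind of order 0 (power series). -/
noncomputable def besselJ0 (z : ℝ) : ℝ :=
  ∑' j : ℕ, (-1 : ℝ) ^ j * (z / 2) ^ (2 * j) / ((j.factorial : ℝ)) ^ 2

/-- Bessel function of the first kind of order 1 (power series). -/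
noncomputable def besselJ1 (z : ℝ) : ℝ :=
  ∑' j : ℕ, (-1 : ℝ) ^ j * (z / 2) ^ (2 * j + 1) / ((j.factorial : ℝ) * ((j + 1).factorial : ℝ))

/-- Truncated hypergeometric sum `₂F₁(a,b;c;z)` with integer parameters,
summed for `k = 0, …, K`. -/
noncomputable def hypF (a b c : ℤ) (K : ℕ) (z : ℝ) : ℝ :=
  ∑ k ∈ Finset.range (K + 1),
    (∏ l ∈ Finset.range k, (((a + l) * (b + l) : ℤ) : ℝ) / (((1 + l) * (c + l) : ℤ) : ℝ)) * z ^ k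

/-- `ω_p = (1/(2ε))·arcsin(sin(2pε)/(1+m²ε²))`. -/
noncomputable def omg (m ε p : ℝ) : ℝ :=
  (1 / (2 * ε)) * Real.arcsin (Real.sin (2 * p * ε) / (1 + m ^ 2 * ε ^ 2))

/-- `(-1)^q` for a real exponent `q`, with the convention `(-1)^(n/2) = iⁿ`:
`neg1pow q = exp(iπq)`. -/
noncomputable def neg1pow (q : ℝ) : ℂ := Complex.exp (Complex.I * Real.pi * q)

/-- The Airy function `Ai(λ) = (1/π)·lim_{R→∞} ∫₀^R cos(y³/3 + λy) dy`. -/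
noncomputable def AiryAi (lam : ℝ) : ℝ :=
  (1 / Real.pi) *
    Filter.limUnder Filter.atTop (fun R : ℝ => ∫ y in (0 : ℝ)..R, Real.cos (y ^ 3 / 3 + lam * y))

/-- The function `θ̃(v)` from Theorem `Airy` of the paper. -/
noncomputable def thetaTilde (m ε v : ℝ) : ℝ :=
  (1 / (2 * ε)) *
    (|v| * Real.arccos (|v| * Real.sqrt ((1 + m ^ 2 * ε ^ 2) ^ 2 - 1) / Real.sqrt (1 - v ^ 2)) -
      Real.arccos (Real.sqrt ((1 + m ^ 2 * ε ^ 2) ^ 2 - 1) /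
        ((1 + m ^ 2 * ε ^ 2) * Real.sqrt (1 - v ^ 2))))

namespace FCkAux

/-- Weight of a path in the homogeneous field (lattice step 1). -/
noncomputable def W (m : ℝ) {n : ℕ} (d : Fin n → Bool) : ℂ :=
  (-Complex.I * m) ^ pathTurns d *
    ∏ k ∈ Finset.range n,
      ((uhom 1 ((pathPos d k : ℝ) + (dirZ (extd d k) : ℝ) / 2) ((k : ℝ) + 1 / 2) : ℝ) : ℂ)

/-- Sum of weights over paths with given endpoint and last direction. -/
noncomputable def S (m : ℝ) (n : ℕ) (x : ℤ) (b : Bool) : ℂ :=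
  ∑ d ∈ Finset.univ.filter (fun d : Fin n → Bool =>
      (extd d 0 = true ∧ pathPos d n = x) ∧ extd d (n - 1) = b), W m d

lemma uhom_eval (X T : ℝ) (z : ℤ) (h : T - X = (z : ℝ)) :
    uhom 1 X T = if (4 : ℤ) ∣ z then -1 else 1 := by
  unfold uhom
  have : (∃ k : ℤ, T - X = 4 * 1 * k) ↔ (4 : ℤ) ∣ z := by
    constructor
    · rintro ⟨k, hk⟩
      refine ⟨k, ?_⟩
      have : (z : ℝ) = ((4 * k : ℤ) : ℝ) := by rw [← h, hk]; push_cast; ring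
      exact_mod_cast this
    · rintro ⟨k, hk⟩
      exact ⟨k, by rw [h, hk]; push_cast; ring⟩
  simp only [this]

lemma extd_snoc_lt {n : ℕ} (d : Fin n → Bool) (c : Bool) (k : ℕ) (hk : k < n) :
    extd (Fin.snoc d c) k = extd d k := by
  unfold extd
  rw [dif_pos (by omega : k < n + 1), dif_pos hk]
  have : (⟨k, by omega⟩ : Fin (n + 1)) = Fin.castSucc ⟨k, hk⟩ := rfl
  rw [this, Fin.snoc_castSucc]

lemma extd_snoc_last {n : ℕ} (d : Fin n → Bool) (c : Bool) :
    extd (Fin.snoc d c) n = c := by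
  unfold extd
  rw [dif_pos (by omega : n < n + 1)]
  have : (⟨n, by omega⟩ : Fin (n + 1)) = Fin.last n := rfl
  rw [this, Fin.snoc_last]

lemma pathPos_snoc {n : ℕ} (d : Fin n → Bool) (c : Bool) (k : ℕ) (hk : k ≤ n) :
    pathPos (Fin.snoc d c) k = pathPos d k := by
  unfold pathPos
  refine Finset.sum_congr rfl fun i hi => ?_
  rw [extd_snoc_lt d c i (by simp at hi; omega)]

lemma pathPos_snoc_succ {n : ℕ} (d : Fin n → Bool) (c : Bool) :
    pathPos (Fin.snoc d c) (n + 1) = pathPos d n + dirZ c := by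
  unfold pathPos
  rw [Finset.sum_range_succ, extd_snoc_last]
  congr 1
  exact pathPos_snoc d c n le_rfl

lemma pathTurns_snoc {n : ℕ} (hn : 1 ≤ n) (d : Fin n → Bool) (c : Bool) :
    pathTurns (Fin.snoc d c) = pathTurns d + if extd d (n - 1) = c then 0 else 1 := by
  unfold pathTurns
  rw [Finset.range_add_one, Finset.filter_insert]
  have hmem : n ∉ (Finset.range n).filter
      (fun k => 0 < k ∧ extd (Fin.snoc d c) (k - 1) ≠ extd (Fin.snoc d c) k) := by
    simp
  have hfilter : (Finset.range n).filter
      (fun k => 0 < k ∧ extd (Fin.snoc d c) (k - 1) ≠ extd (Fin.snoc d c) k)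
      = (Finset.range n).filter (fun k => 0 < k ∧ extd d (k - 1) ≠ extd d k) := by
    refine Finset.filter_congr fun k hk => ?_
    simp only [Finset.mem_range] at hk
    rw [extd_snoc_lt d c k hk, extd_snoc_lt d c (k - 1) (by omega)]
  by_cases hc : extd d (n - 1) = c
  · rw [if_neg, hfilter, if_pos hc]
    · simp
    · push_neg
      intro _
      rw [extd_snoc_lt d c (n - 1) (by omega), extd_snoc_last]
      simp [hc]
  · rw [if_pos, Finset.card_insert_of_notMem hmem, hfilter, if_neg hc]
    refine ⟨hn, ?_⟩
    rw [extd_snoc_lt d c (n - 1) (by omega), extd_snoc_last]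
    simp [hc]

end FCkAux
namespace FCkAux

lemma W_snoc (m : ℝ) {n : ℕ} (hn : 1 ≤ n) (d : Fin n → Bool) (c : Bool) :
    W m (Fin.snoc d c) = W m d * (-Complex.I * m) ^ (if extd d (n - 1) = c then 0 else 1) *
      ((uhom 1 ((pathPos d n : ℝ) + (dirZ c : ℝ) / 2) ((n : ℝ) + 1 / 2) : ℝ) : ℂ) := by
  unfold W
  rw [pathTurns_snoc hn d c, pow_add, Finset.prod_range_succ]
  rw [extd_snoc_last, pathPos_snoc d c n le_rfl]
  have : ∀ k ∈ Finset.range n,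
      ((uhom 1 ((pathPos (Fin.snoc d c) k : ℝ) + (dirZ (extd (Fin.snoc d c) k) : ℝ) / 2)
        ((k : ℝ) + 1 / 2) : ℝ) : ℂ)
      = ((uhom 1 ((pathPos d k : ℝ) + (dirZ (extd d k) : ℝ) / 2) ((k : ℝ) + 1 / 2) : ℝ) : ℂ) := by
    intro k hk
    simp only [Finset.mem_range] at hk
    rw [extd_snoc_lt d c k hk, pathPos_snoc d c k hk.le]
  rw [Finset.prod_congr rfl this]
  ring

lemma S_one (m : ℝ) (x : ℤ) (b : Bool) :
    S m 1 x b = if x = 1 ∧ b = true then -1 else 0 := by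
  unfold S
  rw [Finset.sum_filter]
  rw [← Fintype.sum_equiv (Equiv.funUnique (Fin 1) Bool).symm
    (fun c : Bool => if ((extd (fun _ => c) 0 = true ∧ pathPos (fun _ => c) 1 = x)
        ∧ extd (fun _ => c) 0 = b) then W m (fun _ : Fin 1 => c) else 0) _ (fun c => rfl)]
  have hext : ∀ c : Bool, extd (fun _ : Fin 1 => c) 0 = c := by
    intro c; unfold extd; rw [dif_pos (by omega : 0 < 1)]
  have hpos : ∀ c : Bool, pathPos (fun _ : Fin 1 => c) 1 = dirZ c := by
    intro c; unfold pathPos; rw [Finset.sum_range_one, hext]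
  have hturn : ∀ c : Bool, pathTurns (fun _ : Fin 1 => c) = 0 := by
    intro c; unfold pathTurns
    rw [Finset.card_eq_zero]
    ext k
    simp only [Finset.mem_filter, Finset.mem_range, Finset.notMem_empty, iff_false, not_and]
    intro hk hk0
    omega
  have hW : ∀ c : Bool, W m (fun _ : Fin 1 => c)
      = ((uhom 1 ((dirZ c : ℝ) / 2) (1 / 2) : ℝ) : ℂ) := by
    intro c
    unfold W
    rw [hturn, pow_zero, one_mul, Finset.prod_range_one, hext]
    norm_num
    congr 1
    unfold pathPos
    rw [Finset.sum_range_zero]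
    norm_num
  rw [Fintype.sum_bool]
  simp only [hext, hpos, hW]
  have hu1 : uhom 1 ((dirZ true : ℝ) / 2) (1 / 2) = -1 := by
    rw [uhom_eval _ _ 0 (by unfold dirZ; norm_num)]
    norm_num
  have hd1 : dirZ true = 1 := rfl
  rcases b with _ | _
  · rw [if_neg (by simp), if_neg (by simp), if_neg (by simp)]
    ring
  · by_cases hx : x = 1
    · rw [if_pos ⟨⟨by trivial, by rw [hd1, hx]⟩, by trivial⟩, if_neg (by simp), if_pos ⟨hx, by trivial⟩, hu1]
      norm_num
    · rw [if_neg (by rintro ⟨⟨-, h2⟩, -⟩; rw [hd1] at h2; exact hx h2.symm),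
        if_neg (by simp), if_neg (by tauto)]
      ring

end FCkAux
namespace FCkAux

lemma S_succ (m : ℝ) (n : ℕ) (hn : 1 ≤ n) (x : ℤ) (b : Bool) :
    S m (n + 1) x b
      = (((uhom 1 (((x - dirZ b : ℤ) : ℝ) + (dirZ b : ℝ) / 2) ((n : ℝ) + 1 / 2)) : ℝ) : ℂ) *
        (S m n (x - dirZ b) b + (-Complex.I * m) * S m n (x - dirZ b) (!b)) := by
  set Ub : ℂ :=
    (((uhom 1 (((x - dirZ b : ℤ) : ℝ) + (dirZ b : ℝ) / 2) ((n : ℝ) + 1 / 2)) : ℝ) : ℂ) with hUb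
  have hbij : Function.Bijective
      (fun p : (Fin n → Bool) × Bool => (Fin.snoc p.1 p.2 : Fin (n + 1) → Bool)) := by
    apply Function.bijective_iff_has_inverse.mpr
    refine ⟨fun f => (Fin.init f, f (Fin.last n)), fun p => ?_, fun f => ?_⟩
    · simp [Fin.init_snoc, Fin.snoc_last]
    · simp [Fin.snoc_init_self]
  unfold S
  rw [Finset.sum_filter]
  rw [← Fintype.sum_bijective _ hbij _ _ (fun p => rfl)]
  rw [Fintype.sum_prod_type]
  have key : ∀ d : Fin n → Bool,
      (∑ c : Bool, if ((extd (Fin.snoc d c) 0 = true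
            ∧ pathPos (Fin.snoc d c) (n + 1) = x) ∧ extd (Fin.snoc d c) (n + 1 - 1) = b)
          then W m (Fin.snoc d c) else 0)
      = if (extd d 0 = true ∧ pathPos d n = x - dirZ b)
          then (W m d * (-Complex.I * m) ^ (if extd d (n - 1) = b then 0 else 1)) * Ub
          else 0 := by
    intro d
    rw [Fintype.sum_bool]
    have hlast : ∀ c : Bool, extd (Fin.snoc d c) (n + 1 - 1) = c := by
      intro c
      simpa using extd_snoc_last d c
    have hkill : ∀ c : Bool, c ≠ b →
        (if ((extd (Fin.snoc d c) 0 = true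
            ∧ pathPos (Fin.snoc d c) (n + 1) = x) ∧ extd (Fin.snoc d c) (n + 1 - 1) = b)
          then W m (Fin.snoc d c) else 0) = 0 := by
      intro c hc
      rw [if_neg]
      rintro ⟨-, h2⟩
      rw [hlast] at h2
      exact hc h2
    have hkeep :
        (if ((extd (Fin.snoc d b) 0 = true
            ∧ pathPos (Fin.snoc d b) (n + 1) = x) ∧ extd (Fin.snoc d b) (n + 1 - 1) = b)
          then W m (Fin.snoc d b) else 0)
      = if (extd d 0 = true ∧ pathPos d n = x - dirZ b)
          then (W m d * (-Complex.I * m) ^ (if extd d (n - 1) = b then 0 else 1)) * Ub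
          else 0 := by
      by_cases hP : extd d 0 = true ∧ pathPos d n = x - dirZ b
      · rw [if_pos, if_pos hP]
        · rw [W_snoc m hn d b, hP.2]
        · refine ⟨⟨?_, ?_⟩, hlast b⟩
          · rw [extd_snoc_lt d b 0 (by omega)]
            exact hP.1
          · rw [pathPos_snoc_succ, hP.2]
            ring
      · rw [if_neg, if_neg hP]
        rintro ⟨⟨h1, h2⟩, -⟩
        rw [extd_snoc_lt d b 0 (by omega)] at h1
        rw [pathPos_snoc_succ] at h2
        exact hP ⟨h1, by omega⟩
    rcases b with _ | _
    · rw [hkill true (by simp), hkeep, zero_add]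
    · rw [hkill false (by simp), hkeep, add_zero]
  rw [Finset.sum_congr rfl fun d _ => key d]
  have split : ∀ d : Fin n → Bool,
      (if (extd d 0 = true ∧ pathPos d n = x - dirZ b)
          then (W m d * (-Complex.I * m) ^ (if extd d (n - 1) = b then 0 else 1)) * Ub
          else 0)
      = Ub * ((if ((extd d 0 = true ∧ pathPos d n = x - dirZ b) ∧ extd d (n - 1) = b)
            then W m d else 0)
          + (-Complex.I * m) *
            (if ((extd d 0 = true ∧ pathPos d n = x - dirZ b) ∧ extd d (n - 1) = !b)
            then W m d else 0)) := by
    intro d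
    by_cases hP : extd d 0 = true ∧ pathPos d n = x - dirZ b
    · by_cases hq : extd d (n - 1) = b
      · rw [if_pos hP, if_pos hq, if_pos ⟨hP, hq⟩, if_neg (by simp [hq])]
        ring
      · rw [if_pos hP, if_neg hq, if_neg (by tauto),
          if_pos ⟨hP, by rcases b <;> rcases hv : extd d (n - 1) <;> simp_all⟩]
        ring
    · rw [if_neg hP, if_neg (by tauto), if_neg (by tauto)]
      ring
  rw [Finset.sum_congr rfl fun d _ => split d]
  rw [← Finset.mul_sum]
  congr 1
  rw [Finset.sum_add_distrib, ← Finset.mul_sum]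
  congr 1
  · rw [Finset.sum_filter]
  · congr 1
    rw [Finset.sum_filter]

end FCkAux
namespace FCkAux

/-- The two-component solution (a₁, a₂)-recursion for the homogeneous field (step 1),
unnormalized. `gf m n x` corresponds to time `t = n` (i.e. paths with `n` moves). -/
noncomputable def gf (m : ℝ) : ℕ → ℤ → ℝ × ℝ
  | 0, _ => (0, 0)
  | 1, x => if x = 1 then (0, -1) else (0, 0)
  | (n + 2), x =>
      ((if (4 : ℤ) ∣ ((n : ℤ) + 1 - x) then (-1 : ℝ) else 1) *
         ((gf m (n + 1) (x + 1)).1 + m * (gf m (n + 1) (x + 1)).2),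
       (if (4 : ℤ) ∣ ((n : ℤ) + 2 - x) then (-1 : ℝ) else 1) *
         ((gf m (n + 1) (x - 1)).2 - m * (gf m (n + 1) (x - 1)).1))

lemma S_eq_gf (m : ℝ) : ∀ n : ℕ, 1 ≤ n → ∀ x : ℤ,
    S m n x true = (((gf m n x).2 : ℝ) : ℂ)
      ∧ S m n x false = -Complex.I * (((gf m n x).1 : ℝ) : ℂ) := by
  intro n
  induction n with
  | zero => omega
  | succ k ih =>
    intro _ x
    rcases Nat.eq_zero_or_pos k with hk | hk
    · subst hk
      rw [S_one, S_one]
      show _ ∧ _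
      unfold gf
      by_cases hx : x = 1
      · subst hx; norm_num
      · rw [if_neg hx, if_neg (by tauto), if_neg (by tauto)]
        norm_num
    · -- k ≥ 1
      obtain ⟨j, rfl⟩ : ∃ j, k = j + 1 := ⟨k - 1, by omega⟩
      have ihm := ih (by omega)
      have hidx : j + 1 + 1 = j + 2 := rfl
      have hd1 : dirZ true = 1 := rfl
      have hd0 : dirZ false = -1 := rfl
      constructor
      · rw [S_succ m (j + 1) (by omega) x true]
        simp only [Bool.not_true]
        have hz : (((j + 1 : ℕ) : ℝ)) + 1 / 2 - ((((x - dirZ true) : ℤ) : ℝ) + (dirZ true : ℝ) / 2)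
            = (((j : ℤ) + 2 - x : ℤ) : ℝ) := by rw [hd1]; push_cast; ring
        rw [uhom_eval _ _ ((j : ℤ) + 2 - x) hz]
        rw [(ihm (x - dirZ true)).1, (ihm (x - dirZ true)).2]
        rw [hidx]
        have hgf : (gf m (j + 2) x).2
            = (if (4 : ℤ) ∣ ((j : ℤ) + 2 - x) then (-1 : ℝ) else 1) *
              ((gf m (j + 1) (x - 1)).2 - m * (gf m (j + 1) (x - 1)).1) := rfl
        rw [hgf, hd1]
        split_ifs <;> push_cast <;> ring_nf <;> rw [Complex.I_sq] <;> ring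
      · rw [S_succ m (j + 1) (by omega) x false]
        simp only [Bool.not_false]
        have hz : (((j + 1 : ℕ) : ℝ)) + 1 / 2 - ((((x - dirZ false) : ℤ) : ℝ) + (dirZ false : ℝ) / 2)
            = (((j : ℤ) + 1 - x : ℤ) : ℝ) := by rw [hd0]; push_cast; ring
        rw [uhom_eval _ _ ((j : ℤ) + 1 - x) hz]
        rw [(ihm (x - dirZ false)).1, (ihm (x - dirZ false)).2]
        rw [hidx]
        have hgf : (gf m (j + 2) x).1
            = (if (4 : ℤ) ∣ ((j : ℤ) + 1 - x) then (-1 : ℝ) else 1) *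
              ((gf m (j + 1) (x + 1)).1 + m * (gf m (j + 1) (x + 1)).2) := rfl
        rw [hgf, hd0]
        have hxd : x - (-1 : ℤ) = x + 1 := by ring
        rw [hxd]
        split_ifs <;> push_cast <;> ring_nf <;> rw [Complex.I_sq] <;> ring

lemma kwf_nat (m : ℝ) (n : ℕ) (hn : 1 ≤ n) (x : ℤ) :
    kwf m 1 (uhom 1) (x : ℝ) (n : ℝ)
      = (((1 + m ^ 2) ^ ((1 - (n : ℝ)) / 2) : ℝ) : ℂ) *
        ((((gf m n x).1 : ℝ) : ℂ) + Complex.I * (((gf m n x).2 : ℝ) : ℂ)) := by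
  have hN : (⌊(n : ℝ) / 1⌋).toNat = n := by
    rw [div_one, Int.floor_natCast, Int.toNat_natCast]
  have hX : ⌊(x : ℝ) / 1⌋ = x := by rw [div_one, Int.floor_intCast]
  unfold kwf
  rw [hN, hX]
  simp only [div_one, one_pow, mul_one, one_mul, Complex.ofReal_one]
  have hsum : ∑ d ∈ Finset.univ.filter
        (fun d : Fin n → Bool => extd d 0 = true ∧ pathPos d n = x),
        (-Complex.I * (m : ℂ)) ^ pathTurns d *
          ∏ k ∈ Finset.range n,
            ((uhom 1 ((pathPos d k : ℝ) + (dirZ (extd d k) : ℝ) / 2) ((k : ℝ) + 1 / 2) : ℝ) : ℂ)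
      = S m n x true + S m n x false := by
    rw [← Finset.sum_filter_add_sum_filter_not
      (Finset.univ.filter (fun d : Fin n → Bool => extd d 0 = true ∧ pathPos d n = x))
      (fun d => extd d (n - 1) = true)]
    unfold S
    congr 1
    · rw [Finset.filter_filter]
      rfl
    · rw [Finset.filter_filter]
      congr 1
      refine Finset.filter_congr fun d _ => ?_
      simp [Bool.not_eq_true]
  rw [hsum, (S_eq_gf m n hn x).1, (S_eq_gf m n hn x).2]
  ring_nf
  rw [Complex.I_sq]
  ring
end FCkAux
namespace FCkAux

/-- The truncated hypergeometric-type sum appearing in the closed formula. -/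
noncomputable def Ssum (m : ℝ) (A B : ℕ) : ℝ :=
  ∑ k ∈ Finset.range (A + 1),
    (-1 : ℝ) ^ k * ((A + B - k).choose (A - k) * B.choose k : ℕ) * (1 + m ^ 2) ^ (2 * k)

lemma Ssum_left_zero (m : ℝ) (B : ℕ) : Ssum m 0 B = 1 := by
  unfold Ssum
  rw [Finset.sum_range_one]
  norm_num

lemma Ssum_right_zero (m : ℝ) (A : ℕ) : Ssum m A 0 = 1 := by
  unfold Ssum
  rw [Finset.sum_eq_single 0]
  · norm_num
  · intro k _ hk
    obtain ⟨j, rfl⟩ : ∃ j, k = j + 1 := ⟨k - 1, by omega⟩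
    rw [Nat.choose_eq_zero_of_lt (by omega : 0 < j + 1)]
    norm_num
  · intro h
    exact absurd (Finset.mem_range.mpr (by omega)) h

/-- Pascal-type identity for the coefficients. -/
lemma coef_pascal (a b k : ℕ) (hk : k ≤ a + 1) :
    ((a + 1) + (b + 1) - k).choose ((a + 1) - k) * (b + 1).choose k
      = ((a + 1) + b - k).choose ((a + 1) - k) * b.choose k
        + (if k ≤ a then (a + (b + 1) - k).choose (a - k) * (b + 1).choose k else 0)
        + (if 1 ≤ k then (a + b - (k - 1)).choose (a - (k - 1)) * b.choose (k - 1) else 0) := by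
  rcases Nat.eq_zero_or_pos k with rfl | hk1
  · rw [if_pos (show (0:ℕ) ≤ a from by omega), if_neg (show ¬ (1:ℕ) ≤ 0 from by omega)]
    simp only [Nat.sub_zero, Nat.choose_zero_right, mul_one, add_zero]
    have hp := Nat.choose_succ_succ (a + b + 1) a
    simp only [Nat.succ_eq_add_one] at hp
    rw [show a + 1 + (b + 1) = a + b + 1 + 1 from by omega,
      show a + 1 + b = a + b + 1 from by omega,
      show a + (b + 1) = a + b + 1 from by omega, hp]
    omega
  · obtain ⟨k', rfl⟩ : ∃ k', k = k' + 1 := ⟨k - 1, by omega⟩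
    rw [if_pos (show 1 ≤ k' + 1 from by omega), Nat.add_sub_cancel]
    rcases Nat.lt_or_ge k' a with hka | hka
    · -- 1 ≤ k = k'+1 ≤ a
      rw [if_pos (show k' + 1 ≤ a from by omega)]
      obtain ⟨r, rfl⟩ : ∃ r, a = k' + r + 1 := ⟨a - k' - 1, by omega⟩
      have hp1 := Nat.choose_succ_succ (b + r + 1) r
      have hp2 := Nat.choose_succ_succ b k'
      simp only [Nat.succ_eq_add_one] at hp1 hp2
      rw [show k' + r + 1 + 1 + (b + 1) - (k' + 1) = b + r + 1 + 1 from by omega,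
        show k' + r + 1 + 1 - (k' + 1) = r + 1 from by omega,
        show k' + r + 1 + 1 + b - (k' + 1) = b + r + 1 from by omega,
        show k' + r + 1 + (b + 1) - (k' + 1) = b + r + 1 from by omega,
        show k' + r + 1 - (k' + 1) = r from by omega,
        show k' + r + 1 + b - k' = b + r + 1 from by omega,
        show k' + r + 1 - k' = r + 1 from by omega,
        hp1, hp2]
      ring
    · -- k = a + 1
      have hk2 : k' = a := by omega
      subst hk2
      rw [if_neg (show ¬ k' + 1 ≤ k' from by omega)]
      have hp2 := Nat.choose_succ_succ b k'
      simp only [Nat.succ_eq_add_one] at hp2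
      rw [show k' + 1 + (b + 1) - (k' + 1) = b + 1 from by omega,
        show k' + 1 + b - (k' + 1) = b from by omega,
        show k' + 1 - (k' + 1) = 0 from by omega,
        show k' + b - k' = b from by omega,
        show k' - k' = 0 from by omega,
        hp2]
      simp only [Nat.choose_zero_right, one_mul]
      omega

/-- The key contiguous relation for `Ssum`. -/
lemma Ssum_rec (m : ℝ) (a b : ℕ) :
    Ssum m (a + 1) (b + 1) - Ssum m (a + 1) b
      = Ssum m a (b + 1) - (1 + m ^ 2) ^ 2 * Ssum m a b := by
  have key : ∀ k ∈ Finset.range (a + 2),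
      (-1 : ℝ) ^ k * (((a + 1) + (b + 1) - k).choose ((a + 1) - k) * (b + 1).choose k : ℕ)
          * (1 + m ^ 2) ^ (2 * k)
        - (-1 : ℝ) ^ k * (((a + 1) + b - k).choose ((a + 1) - k) * b.choose k : ℕ)
          * (1 + m ^ 2) ^ (2 * k)
      = (if k ≤ a then (-1 : ℝ) ^ k * ((a + (b + 1) - k).choose (a - k) * (b + 1).choose k : ℕ)
            * (1 + m ^ 2) ^ (2 * k) else 0)
        + (if 1 ≤ k then -((1 + m ^ 2) ^ 2) *
            ((-1 : ℝ) ^ (k - 1) * ((a + b - (k - 1)).choose (a - (k - 1)) * b.choose (k - 1) : ℕ)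
              * (1 + m ^ 2) ^ (2 * (k - 1))) else 0) := by
    intro k hk
    simp only [Finset.mem_range] at hk
    have hc := coef_pascal a b k (by omega)
    have hcast : ((((a + 1) + (b + 1) - k).choose ((a + 1) - k) * (b + 1).choose k : ℕ) : ℝ)
        = ((((a + 1) + b - k).choose ((a + 1) - k) * b.choose k : ℕ) : ℝ)
          + (if k ≤ a then (((a + (b + 1) - k).choose (a - k) * (b + 1).choose k : ℕ) : ℝ) else 0)
          + (if 1 ≤ k then (((a + b - (k - 1)).choose (a - (k - 1)) * b.choose (k - 1) : ℕ) : ℝ)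
              else 0) := by
      rw [hc]
      push_cast [apply_ite (fun t : ℕ => (t : ℝ))]
      ring
    rcases Nat.eq_zero_or_pos k with rfl | hk1
    · rw [if_pos (show (0:ℕ) ≤ a from by omega), if_neg (show ¬ (1:ℕ) ≤ 0 from by omega)]
        at hcast ⊢
      rw [add_zero] at hcast
      rw [hcast]
      ring
    · obtain ⟨k', rfl⟩ : ∃ k', k = k' + 1 := ⟨k - 1, by omega⟩
      rw [if_pos (show 1 ≤ k' + 1 from by omega)] at hcast ⊢
      simp only [Nat.add_sub_cancel] at hcast ⊢
      by_cases hka : k' + 1 ≤ a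
      · rw [if_pos hka] at hcast ⊢
        rw [hcast, pow_succ, show 2 * (k' + 1) = 2 * k' + 2 from by ring, pow_add]
        ring
      · rw [if_neg hka] at hcast ⊢
        rw [add_zero] at hcast
        rw [hcast, pow_succ, show 2 * (k' + 1) = 2 * k' + 2 from by ring, pow_add]
        ring
  unfold Ssum
  rw [show a + 1 + 1 = a + 2 from rfl, ← Finset.sum_sub_distrib,
    Finset.sum_congr rfl key, Finset.sum_add_distrib]
  congr 1
  · -- truncated first sum
    rw [show a + 2 = (a + 1) + 1 from rfl, Finset.sum_range_succ,
      if_neg (show ¬ a + 1 ≤ a from by omega), add_zero]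
    refine Finset.sum_congr rfl fun k hk => ?_
    simp only [Finset.mem_range] at hk
    rw [if_pos (show k ≤ a from by omega)]
  · -- shifted second sum
    rw [Finset.sum_range_succ' _ (a + 1)]
    rw [if_neg (show ¬ (1:ℕ) ≤ 0 from by omega), add_zero]
    have hterm : ∀ k, (if 1 ≤ k + 1 then -((1 + m ^ 2) ^ 2) *
            ((-1 : ℝ) ^ (k + 1 - 1) * ((a + b - (k + 1 - 1)).choose (a - (k + 1 - 1))
                * b.choose (k + 1 - 1) : ℕ)
              * (1 + m ^ 2) ^ (2 * (k + 1 - 1))) else 0)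
        = -((1 + m ^ 2) ^ 2) * ((-1 : ℝ) ^ k * ((a + b - k).choose (a - k) * b.choose k : ℕ)
              * (1 + m ^ 2) ^ (2 * k)) := by
      intro k
      rw [if_pos (show 1 ≤ k + 1 from by omega), Nat.add_sub_cancel]
    rw [Finset.sum_congr rfl fun k _ => hterm k, ← Finset.mul_sum]
    ring

end FCkAux
namespace FCkAux

/-- Closed form for the first component. -/
noncomputable def G (m : ℝ) (ξ η : ℕ) : ℝ :=
  (-1 : ℝ) ^ (ξ + 1) * m * (1 + m ^ 2) ^ (((1 + η) * ξ) % 2) * Ssum m (ξ / 2) ((η - 1) / 2)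

lemma neg_one_pow_even {n : ℕ} (h : n % 2 = 0) : (-1 : ℝ) ^ n = 1 :=
  Even.neg_one_pow ⟨n / 2, by omega⟩

lemma neg_one_pow_odd {n : ℕ} (h : n % 2 = 1) : (-1 : ℝ) ^ n = -1 :=
  Odd.neg_one_pow ⟨n / 2, by omega⟩

lemma G_oo (m : ℝ) (a b : ℕ) : G m (2 * a + 1) (2 * b + 1) = m * Ssum m a b := by
  unfold G
  rw [show (2 * a + 1) / 2 = a from by omega,
    show (2 * b + 1 - 1) / 2 = b from by omega,
    show ((1 + (2 * b + 1)) * (2 * a + 1)) % 2 = 0 from by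
      have : (1 + (2 * b + 1)) * (2 * a + 1) = 2 * ((b + 1) * (2 * a + 1)) := by ring
      omega,
    neg_one_pow_even (show (2 * a + 1 + 1) % 2 = 0 from by omega), pow_zero]
  ring

lemma G_oe (m : ℝ) (a b : ℕ) : G m (2 * a + 1) (2 * b + 2) = m * (1 + m ^ 2) * Ssum m a b := by
  unfold G
  rw [show (2 * a + 1) / 2 = a from by omega,
    show (2 * b + 2 - 1) / 2 = b from by omega,
    show ((1 + (2 * b + 2)) * (2 * a + 1)) % 2 = 1 from by
      have : (1 + (2 * b + 2)) * (2 * a + 1) = 2 * (2 * a * b + 3 * a + b + 1) + 1 := by ring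
      omega,
    neg_one_pow_even (show (2 * a + 1 + 1) % 2 = 0 from by omega), pow_one]
  ring

lemma G_eo (m : ℝ) (a b : ℕ) : G m (2 * a) (2 * b + 1) = -(m * Ssum m a b) := by
  unfold G
  rw [show (2 * a) / 2 = a from by omega,
    show (2 * b + 1 - 1) / 2 = b from by omega,
    show ((1 + (2 * b + 1)) * (2 * a)) % 2 = 0 from by
      have : (1 + (2 * b + 1)) * (2 * a) = 2 * ((2 * b + 2) * a) := by ring
      omega,
    neg_one_pow_odd (show (2 * a + 1) % 2 = 1 from by omega), pow_zero]
  ring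

lemma G_ee (m : ℝ) (a b : ℕ) : G m (2 * a) (2 * b + 2) = -(m * Ssum m a b) := by
  unfold G
  rw [show (2 * a) / 2 = a from by omega,
    show (2 * b + 2 - 1) / 2 = b from by omega,
    show ((1 + (2 * b + 2)) * (2 * a)) % 2 = 0 from by
      have : (1 + (2 * b + 2)) * (2 * a) = 2 * ((2 * b + 3) * a) := by ring
      omega,
    neg_one_pow_odd (show (2 * a + 1) % 2 = 1 from by omega), pow_zero]
  ring

lemma G_zero (m : ℝ) (η : ℕ) : G m 0 η = -m := by
  unfold G
  rw [show (0 : ℕ) / 2 = 0 from rfl, Ssum_left_zero,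
    show ((1 + η) * 0) % 2 = 0 from by omega, pow_zero]
  ring

/-- The identity behind the `a₂`-recursion for the closed form. -/
lemma star (m : ℝ) (ξ η : ℕ) (hξ : 1 ≤ ξ) (hη : 1 ≤ η) :
    G m ξ (η + 1) - G m ξ η
      = (if η % 2 = 0 then (-1 : ℝ) else 1) *
          (G m (ξ - 1) (η + 1) - (1 + m ^ 2) * G m (ξ - 1) η) := by
  rcases Nat.even_or_odd η with ⟨b, hb⟩ | ⟨b, hb⟩
  · -- η = 2b, b ≥ 1 : η even
    obtain ⟨b', rfl⟩ : ∃ b', b = b' + 1 := ⟨b - 1, by omega⟩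
    subst hb
    rw [if_pos (by omega)]
    rcases Nat.even_or_odd ξ with ⟨a, ha⟩ | ⟨a, ha⟩
    · -- ξ = 2a, a ≥ 1
      obtain ⟨a', rfl⟩ : ∃ a', a = a' + 1 := ⟨a - 1, by omega⟩
      subst ha
      rw [show (a' + 1) + (a' + 1) = 2 * (a' + 1) from by ring,
        show 2 * (a' + 1) - 1 = 2 * a' + 1 from by omega,
        show (b' + 1) + (b' + 1) = 2 * b' + 2 from by ring,
        show 2 * b' + 2 + 1 = 2 * (b' + 1) + 1 from by ring]
      rw [G_eo m (a' + 1) (b' + 1), G_ee m (a' + 1) b',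
        show 2 * (b' + 1) + 1 = 2 * b' + 2 + 1 from by ring,
        show 2 * b' + 2 + 1 = 2 * (b' + 1) + 1 from by ring]
      rw [show (2 : ℕ) * (b' + 1) + 1 = 2 * (b' + 1) + 1 from rfl]
      rw [G_oo m a' (b' + 1), G_oe m a' b']
      have h := Ssum_rec m a' b'
      rw [show a' + 1 = a' + 1 from rfl]
      linarith [mul_left_cancel₀ (show (1:ℝ) ≠ 0 from one_ne_zero) (rfl :
        (1:ℝ) * 1 = 1 * 1), congrArg (fun t => m * t) h]
    · -- ξ = 2a+1
      subst ha
      rw [show 2 * a + 1 - 1 = 2 * a from by omega,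
        show (b' + 1) + (b' + 1) = 2 * b' + 2 from by ring,
        show 2 * b' + 2 + 1 = 2 * (b' + 1) + 1 from by ring]
      rw [G_oo m a (b' + 1), G_oe m a b', G_eo m a (b' + 1), G_ee m a b']
      ring
  · -- η = 2b+1 : η odd
    subst hb
    rw [if_neg (by omega)]
    rcases Nat.even_or_odd ξ with ⟨a, ha⟩ | ⟨a, ha⟩
    · -- ξ = 2a, a ≥ 1
      obtain ⟨a', rfl⟩ : ∃ a', a = a' + 1 := ⟨a - 1, by omega⟩
      subst ha
      rw [show (a' + 1) + (a' + 1) = 2 * (a' + 1) from by ring,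
        show 2 * (a' + 1) - 1 = 2 * a' + 1 from by omega,
        show 2 * b + 1 + 1 = 2 * b + 2 from by ring]
      rw [G_ee m (a' + 1) b, G_eo m (a' + 1) b, G_oe m a' b, G_oo m a' b]
      ring
    · -- ξ = 2a+1
      subst ha
      rw [show 2 * a + 1 - 1 = 2 * a from by omega,
        show 2 * b + 1 + 1 = 2 * b + 2 from by ring]
      rw [G_oe m a b, G_oo m a b, G_ee m a b, G_eo m a b]
      ring

end FCkAux
namespace FCkAux

lemma gf_step (m : ℝ) (n : ℕ) (x : ℤ) :
    gf m (n + 2) x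
      = ((if (4 : ℤ) ∣ ((n : ℤ) + 1 - x) then (-1 : ℝ) else 1) *
           ((gf m (n + 1) (x + 1)).1 + m * (gf m (n + 1) (x + 1)).2),
         (if (4 : ℤ) ∣ ((n : ℤ) + 2 - x) then (-1 : ℝ) else 1) *
           ((gf m (n + 1) (x - 1)).2 - m * (gf m (n + 1) (x - 1)).1)) := rfl

lemma gf_vanish (m : ℝ) : ∀ n : ℕ, ∀ x : ℤ,
    ((n : ℤ) < x ∨ x < 2 - (n : ℤ) ∨ ((n : ℤ) - x) % 2 ≠ 0) → gf m n x = (0, 0) := by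
  intro n
  induction n using Nat.strong_induction_on with
  | _ n ih =>
    match n with
    | 0 => intro x _; rfl
    | 1 =>
      intro x hx
      have : x ≠ 1 := by omega
      show (if x = 1 then ((0 : ℝ), (-1 : ℝ)) else ((0 : ℝ), (0 : ℝ))) = _
      rw [if_neg this]
    | (n + 2) =>
      intro x hx
      rw [gf_step]
      have h1 : gf m (n + 1) (x + 1) = (0, 0) := by
        refine ih (n + 1) (by omega) (x + 1) ?_
        push_cast at hx ⊢
        omega
      have h2 : gf m (n + 1) (x - 1) = (0, 0) := by
        refine ih (n + 1) (by omega) (x - 1) ?_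
        push_cast at hx ⊢
        omega
      rw [h1, h2]
      norm_num

lemma gf_edge (m : ℝ) : ∀ ξ : ℕ, gf m (ξ + 1) ((ξ : ℤ) + 1) = (0, (-1) ^ (ξ + 1)) := by
  intro ξ
  induction ξ with
  | zero =>
    show (if (0 : ℤ) + 1 = 1 then ((0 : ℝ), (-1 : ℝ)) else ((0 : ℝ), (0 : ℝ))) = _
    norm_num
  | succ k ihk =>
    rw [show k + 1 + 1 = k + 2 from rfl, gf_step]
    have h1 : gf m (k + 1) (((k : ℤ) + 1) + 1 + 1) = (0, 0) := by
      refine gf_vanish m (k + 1) _ ?_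
      push_cast
      omega
    have h2 : ((k : ℤ) + 1) + 1 - 1 = (k : ℤ) + 1 := by ring
    rw [show ((k + 1 : ℕ) : ℤ) + 1 = ((k : ℤ) + 1) + 1 from by push_cast; ring] 
    rw [h1, h2, ihk]
    rw [if_pos (show (4 : ℤ) ∣ ((k : ℤ) + 2 - ((k : ℤ) + 1 + 1)) from ⟨0, by ring⟩)]
    rw [if_neg (show ¬ (4 : ℤ) ∣ ((k : ℤ) + 1 - ((k : ℤ) + 1 + 1)) from by
      rintro ⟨c, hc⟩; omega)]
    have h3 : ((-1 : ℝ)) ^ (k + 1 + 1) = -(-1 : ℝ) ^ (k + 1) := by ring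
    rw [h3]
    norm_num

lemma G_one (m : ℝ) (ξ : ℕ) : G m ξ 1 = (-1 : ℝ) ^ (ξ + 1) * m := by
  unfold G
  rw [show ((1:ℕ) - 1) / 2 = 0 from rfl, Ssum_right_zero,
    show ((1 + 1) * ξ) % 2 = 0 from by omega, pow_zero]
  ring

lemma gf_main (m : ℝ) : ∀ N ξ η : ℕ, ξ + η = N → 1 ≤ η →
    (gf m (ξ + η + 1) ((ξ : ℤ) - (η : ℤ) + 1)).1 = G m ξ η
      ∧ m * (gf m (ξ + η + 1) ((ξ : ℤ) - (η : ℤ) + 1)).2 = G m ξ (η + 1) - G m ξ η := by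
  intro N
  induction N using Nat.strong_induction_on with
  | _ N ih =>
    intro ξ η hN hη
    obtain ⟨M, hM⟩ : ∃ M, ξ + η + 1 = M + 2 := ⟨ξ + η - 1, by omega⟩
    rw [hM, gf_step]
    dsimp only
    have hcond1 : ¬ (4 : ℤ) ∣ ((M : ℤ) + 1 - ((ξ : ℤ) - (η : ℤ) + 1)) := by
      rintro ⟨c, hc⟩; omega
    rw [if_neg hcond1, one_mul]
    have hM1 : M + 1 = ξ + η := by omega
    rw [hM1]
    rcases Nat.lt_or_ge η 2 with hη2 | hη2
    · -- η = 1
      have hη1 : η = 1 := by omega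
      subst hη1
      have harg1 : (ξ : ℤ) - ((1:ℕ) : ℤ) + 1 + 1 = (ξ : ℤ) + 1 := by push_cast; ring
      rw [harg1, gf_edge]
      constructor
      · rw [G_one]
        dsimp only
        ring
      · -- second component
        have hcond2 : ¬ (4 : ℤ) ∣ ((M : ℤ) + 2 - ((ξ : ℤ) - ((1:ℕ) : ℤ) + 1)) := by
          rintro ⟨c, hc⟩; omega
        rw [if_neg hcond2, one_mul]
        rcases Nat.eq_zero_or_pos ξ with rfl | hξ
        · have hv : gf m (0 + 1) (((0:ℕ) : ℤ) - ((1:ℕ) : ℤ) + 1 - 1) = (0, 0) := by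
            refine gf_vanish m (0 + 1) _ ?_
            push_cast
            first | omega | tauto
          rw [hv]
          rw [G_zero, G_zero]
          norm_num
        · obtain ⟨ζ, rfl⟩ : ∃ ζ, ξ = ζ + 1 := ⟨ξ - 1, by omega⟩
          have harg2 : ((ζ + 1 : ℕ) : ℤ) - ((1:ℕ) : ℤ) + 1 - 1 = (ζ : ℤ) - ((1:ℕ) : ℤ) + 1 := by
            push_cast; ring
          rw [show ζ + 1 + 1 = ζ + 1 + 1 from rfl, harg2]
          have IH2 := ih (N - 1) (by omega) ζ 1 (by omega) (by omega)
          have hs := star m (ζ + 1) 1 (by omega) (by omega)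
          rw [if_neg (show ¬ (1 % 2 = 0) from by omega), Nat.add_sub_cancel, one_mul] at hs
          have IH2a := IH2.1
          have IH2b := IH2.2
          linear_combination IH2b - m ^ 2 * IH2a - hs
    · -- η ≥ 2
      obtain ⟨e, rfl⟩ : ∃ e, η = e + 2 := ⟨η - 2, by omega⟩
      have harg1 : (ξ : ℤ) - ((e + 2 : ℕ) : ℤ) + 1 + 1 = (ξ : ℤ) - ((e + 1 : ℕ) : ℤ) + 1 := by
        push_cast; ring
      rw [show ξ + (e + 2) = ξ + (e + 1) + 1 from by omega, harg1]
      have IH1 := ih (N - 1) (by omega) ξ (e + 1) (by omega) (by omega)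
      have IH1a := IH1.1
      have IH1b := IH1.2
      have hGoal1 : (gf m (ξ + (e + 1) + 1) ((ξ : ℤ) - ((e + 1 : ℕ) : ℤ) + 1)).1
          + m * (gf m (ξ + (e + 1) + 1) ((ξ : ℤ) - ((e + 1 : ℕ) : ℤ) + 1)).2
          = G m ξ (e + 2) := by
        rw [show e + 1 + 1 = e + 2 from rfl] at IH1b
        linear_combination IH1a + IH1b
      constructor
      · exact hGoal1
      · rcases Nat.eq_zero_or_pos ξ with rfl | hξ
        · have hv : gf m (0 + (e + 1) + 1) (((0:ℕ) : ℤ) - ((e + 2 : ℕ) : ℤ) + 1 - 1) = (0, 0) := by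
            refine gf_vanish m (0 + (e + 1) + 1) _ ?_
            push_cast
            first | omega | tauto
          rw [hv]
          rw [G_zero, G_zero]
          norm_num
        · obtain ⟨ζ, rfl⟩ : ∃ ζ, ξ = ζ + 1 := ⟨ξ - 1, by omega⟩
          have harg2 : ((ζ + 1 : ℕ) : ℤ) - ((e + 2 : ℕ) : ℤ) + 1 - 1
              = (ζ : ℤ) - ((e + 2 : ℕ) : ℤ) + 1 := by push_cast; ring
          rw [show ζ + 1 + (e + 1) + 1 = ζ + (e + 2) + 1 from by omega, harg2]
          have IH2 := ih (N - 1) (by omega) ζ (e + 2) (by omega) (by omega)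
          have IH2a := IH2.1
          have IH2b := IH2.2
          have hs := star m (ζ + 1) (e + 2) (by omega) (by omega)
          rw [Nat.add_sub_cancel] at hs
          have hiff : ((4 : ℤ) ∣ ((M : ℤ) + 2 - (((ζ + 1 : ℕ) : ℤ) - ((e + 2 : ℕ) : ℤ) + 1)))
              ↔ ((e + 2) % 2 = 0) := by
            constructor
            · rintro ⟨c, hc⟩; omega
            · intro h; exact ⟨((e : ℤ) + 2) / 2, by omega⟩
          by_cases hpar : (e + 2) % 2 = 0
          · rw [if_pos (hiff.mpr hpar)] 
            rw [if_pos hpar] at hs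
            linear_combination -IH2b + m ^ 2 * IH2a - hs
          · rw [if_neg (fun h => hpar (hiff.mp h))]
            rw [if_neg hpar] at hs
            linear_combination IH2b - m ^ 2 * IH2a - hs

end FCkAux
namespace FCkAux

lemma hyp_term (A B : ℕ) : ∀ k, k ≤ A →
    (((A + B).choose A : ℕ) : ℝ) *
      ∏ l ∈ Finset.range k,
        (((-(B : ℤ) + l) * (-(A : ℤ) + l) : ℤ) : ℝ) /
          (((1 + l) * (-(A : ℤ) - (B : ℤ) + l) : ℤ) : ℝ)
    = (-1 : ℝ) ^ k * ((A + B - k).choose (A - k) * B.choose k : ℕ) := by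
  intro k
  induction k with
  | zero =>
    intro _
    simp
  | succ k ihk =>
    intro hk
    rw [Finset.prod_range_succ, ← mul_assoc, ihk (by omega)]
    rcases Nat.lt_or_ge k B with hkB | hkB
    · -- k < B
      obtain ⟨a', rfl⟩ : ∃ a', A = k + a' + 1 := ⟨A - k - 1, by omega⟩
      obtain ⟨b', rfl⟩ : ∃ b', B = k + b' + 1 := ⟨B - k - 1, by omega⟩
      have hnum : ((-((k + b' + 1 : ℕ) : ℤ) + (k : ℕ)) * (-((k + a' + 1 : ℕ) : ℤ) + (k : ℕ)) : ℤ)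
          = (((b' + 1) * (a' + 1) : ℕ) : ℤ) := by push_cast; ring
      have hden : ((1 + (k : ℕ)) * (-((k + a' + 1 : ℕ) : ℤ) - ((k + b' + 1 : ℕ) : ℤ) + (k : ℕ)) : ℤ)
          = -(((k + 1) * (k + a' + b' + 2) : ℕ) : ℤ) := by push_cast; ring
      rw [hnum, hden,
        show (k + a' + 1) + (k + b' + 1) - k = k + a' + b' + 2 from by omega,
        show (k + a' + 1) - k = a' + 1 from by omega,
        show (k + a' + 1) + (k + b' + 1) - (k + 1) = k + a' + b' + 1 from by omega,
        show (k + a' + 1) - (k + 1) = a' from by omega]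
      have hy : ((((k + 1) * (k + a' + b' + 2) : ℕ) : ℤ) : ℝ) ≠ 0 := by
        push_cast; positivity
      have l1 : (k + b' + 1).choose (k + 1) * (k + 1) = (k + b' + 1).choose k * (b' + 1) := by
        have h := Nat.choose_succ_right_eq (k + b' + 1) k
        rw [show (k + b' + 1) - k = b' + 1 from by omega] at h
        exact h
      have l2 : (k + a' + b' + 2) * (k + a' + b' + 1).choose a'
          = (k + a' + b' + 2).choose (a' + 1) * (a' + 1) := by
        have h := Nat.add_one_mul_choose_eq (k + a' + b' + 1) a'
        rw [show k + a' + b' + 1 + 1 = k + a' + b' + 2 from by omega] at h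
        exact h
      have key : ((k + a' + b' + 2).choose (a' + 1) * (k + b' + 1).choose k)
            * ((b' + 1) * (a' + 1))
          = ((k + a' + b' + 1).choose a' * (k + b' + 1).choose (k + 1))
            * ((k + 1) * (k + a' + b' + 2)) := by
        calc ((k + a' + b' + 2).choose (a' + 1) * (k + b' + 1).choose k)
              * ((b' + 1) * (a' + 1))
            = ((k + a' + b' + 2).choose (a' + 1) * (a' + 1))
                * ((k + b' + 1).choose k * (b' + 1)) := by ring
          _ = ((k + a' + b' + 2) * (k + a' + b' + 1).choose a')
                * ((k + b' + 1).choose (k + 1) * (k + 1)) := by rw [l2, l1]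
          _ = _ := by ring
      have h2 : (((k + a' + b' + 2).choose (a' + 1) * (k + b' + 1).choose k : ℕ) : ℝ)
            * (((((b' + 1) * (a' + 1) : ℕ) : ℤ)) : ℝ)
          = (((k + a' + b' + 1).choose a' * (k + b' + 1).choose (k + 1) : ℕ) : ℝ)
            * (((((k + 1) * (k + a' + b' + 2) : ℕ) : ℤ)) : ℝ) := by
        exact_mod_cast key
      have h3 : (((k + a' + b' + 2).choose (a' + 1) * (k + b' + 1).choose k : ℕ) : ℝ)
            * ((((((b' + 1) * (a' + 1) : ℕ) : ℤ)) : ℝ)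
              / (((((k + 1) * (k + a' + b' + 2) : ℕ) : ℤ)) : ℝ))
          = (((k + a' + b' + 1).choose a' * (k + b' + 1).choose (k + 1) : ℕ) : ℝ) := by
        rw [← mul_div_assoc, h2]
        exact mul_div_cancel_right₀ _ hy
      calc (-1 : ℝ) ^ k * (((k + a' + b' + 2).choose (a' + 1) * (k + b' + 1).choose k : ℕ) : ℝ)
            * ((((((b' + 1) * (a' + 1) : ℕ) : ℤ)) : ℝ)
              / ((-(((k + 1) * (k + a' + b' + 2) : ℕ) : ℤ) : ℤ) : ℝ))
          = -((-1 : ℝ) ^ k * ((((k + a' + b' + 2).choose (a' + 1)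
                * (k + b' + 1).choose k : ℕ) : ℝ)
              * ((((((b' + 1) * (a' + 1) : ℕ) : ℤ)) : ℝ)
                / (((((k + 1) * (k + a' + b' + 2) : ℕ) : ℤ)) : ℝ)))) := by
            rw [Int.cast_neg, div_neg]; ring
        _ = -((-1 : ℝ) ^ k
              * (((k + a' + b' + 1).choose a' * (k + b' + 1).choose (k + 1) : ℕ) : ℝ)) := by
            rw [h3]
        _ = (-1 : ℝ) ^ (k + 1)
              * (((k + a' + b' + 1).choose a' * (k + b' + 1).choose (k + 1) : ℕ) : ℝ) := by
            rw [pow_succ]; ring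
    · -- k ≥ B
      by_cases hEq : k = B
      · subst hEq
        have hzero : ((-(k : ℤ) + (k : ℕ)) * (-(A : ℤ) + (k : ℕ)) : ℤ) = 0 := by
          push_cast; ring
        rw [hzero, Nat.choose_eq_zero_of_lt (show k < k + 1 from by omega)]
        norm_num
      · have hlt : B < k := by omega
        rw [Nat.choose_eq_zero_of_lt hlt,
          Nat.choose_eq_zero_of_lt (show B < k + 1 from by omega)]
        norm_num

lemma Ssum_eq_hypF (m : ℝ) (A B : ℕ) :
    (((A + B).choose A : ℕ) : ℝ) * hypF (-(B : ℤ)) (-(A : ℤ)) (-(A : ℤ) - (B : ℤ)) A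
        ((1 + m ^ 2) ^ 2)
      = Ssum m A B := by
  unfold hypF Ssum
  rw [Finset.mul_sum]
  refine Finset.sum_congr rfl fun k hkmem => ?_
  simp only [Finset.mem_range] at hkmem
  rw [← mul_assoc, hyp_term A B k (by omega), ← pow_mul]

end FCkAux

/-- Lemma (hypergeometric closed formula for the first component of the exact solution). -/
theorem hypergeometric_formula_a1 (m : ℝ) (hm : 0 ≤ m) (ξ η : ℕ) (hη : 1 ≤ η) :
    ka1 m 1 (uhom 1) ((ξ : ℝ) - η + 1) ((ξ : ℝ) + η + 1)
      = (-1 : ℝ) ^ (ξ + 1) * m * (1 + m ^ 2) ^ ((((1 + η) * ξ) % 2))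
        * (1 + m ^ 2) ^ (-(((ξ : ℝ) + η) / 2))
        * (Nat.choose (ξ / 2 + (η - 1) / 2) (ξ / 2) : ℝ)
        * hypF (-(((η - 1) / 2 : ℕ) : ℤ)) (-((ξ / 2 : ℕ) : ℤ))
            (-((ξ / 2 : ℕ) : ℤ) - (((η - 1) / 2 : ℕ) : ℤ)) (ξ / 2) ((1 + m ^ 2) ^ 2) := by
  have hx : ((ξ : ℝ) - η + 1) = (((ξ : ℤ) - (η : ℤ) + 1 : ℤ) : ℝ) := by push_cast; ring
  have ht : ((ξ : ℝ) + η + 1) = (((ξ + η + 1 : ℕ) : ℕ) : ℝ) := by push_cast; ring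
  unfold ka1
  rw [hx, ht, FCkAux.kwf_nat m (ξ + η + 1) (by omega) ((ξ : ℤ) - (η : ℤ) + 1)]
  have hre : ((((1 + m ^ 2) ^ ((1 - ((ξ + η + 1 : ℕ) : ℝ)) / 2) : ℝ) : ℂ) *
      ((((FCkAux.gf m (ξ + η + 1) ((ξ : ℤ) - (η : ℤ) + 1)).1 : ℝ) : ℂ)
        + Complex.I * (((FCkAux.gf m (ξ + η + 1) ((ξ : ℤ) - (η : ℤ) + 1)).2 : ℝ) : ℂ))).re
      = ((1 + m ^ 2) ^ ((1 - ((ξ + η + 1 : ℕ) : ℝ)) / 2) : ℝ)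
          * (FCkAux.gf m (ξ + η + 1) ((ξ : ℤ) - (η : ℤ) + 1)).1 := by
    simp [Complex.add_re, Complex.mul_re, Complex.I_re, Complex.I_im,
      Complex.ofReal_re, Complex.ofReal_im]
  rw [hre, (FCkAux.gf_main m (ξ + η) ξ η rfl hη).1]
  rw [show (1 - ((ξ + η + 1 : ℕ) : ℝ)) / 2 = -(((ξ : ℝ) + η) / 2) from by push_cast; ring]
  unfold FCkAux.G
  rw [← FCkAux.Ssum_eq_hypF m (ξ / 2) ((η - 1) / 2)]
  ring
end

section
/- Let m, ε > 0 and set ω_p := (1/(2ε))·arcsin( sin(2pε)/(1+m²ε²) ). Then there exists a constant C = C(m,ε) > 0 such that for every real t > 0: | ∫_{−π/(4ε)}^{π/(4ε)} cos(2ω_p t) / cos²(2ω_p ε) dp | ≤ C·t^{−1/3}. -/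
open scoped BigOperators

section OscAux
open Real intervalIntegral

noncomputable def Sf (A ε p : ℝ) : ℝ := Real.sqrt (A^2 - Real.sin (2*p*ε)^2)
noncomputable def phf (A ε p : ℝ) : ℝ := Real.arcsin (Real.sin (2*p*ε) / A)
noncomputable def Df (A ε p : ℝ) : ℝ := Real.cos (2*p*ε) * Sf A ε p
noncomputable def Sdf (A ε p : ℝ) : ℝ :=
  1 / (2 * Sf A ε p) * (-(2 * Real.sin (2*p*ε) * (Real.cos (2*p*ε) * (2*ε))))
noncomputable def Ddf (A ε p : ℝ) : ℝ :=
  (-Real.sin (2*p*ε) * (2*ε)) * Sf A ε p + Real.cos (2*p*ε) * Sdf A ε p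
noncomputable def Gf (A ε t p : ℝ) : ℝ := (A^2/(2*t)) / Df A ε p
noncomputable def Gdf (A ε t p : ℝ) : ℝ :=
  (0 * Df A ε p - (A^2/(2*t)) * Ddf A ε p) / Df A ε p ^ 2
noncomputable def vf (A ε t p : ℝ) : ℝ := Real.sin (t/ε * phf A ε p)
noncomputable def vdf (A ε t p : ℝ) : ℝ :=
  Real.cos (t/ε * phf A ε p) * (t/ε * (2*ε*Real.cos (2*p*ε) / Sf A ε p))
noncomputable def F2f (A ε t p : ℝ) : ℝ :=
  Real.cos (t/ε * phf A ε p) * (A^2 / (A^2 - Real.sin (2*p*ε)^2))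

variable {A ε t p : ℝ}

lemma pos_sub (hA : 1 < A) : 0 < A^2 - Real.sin (2*p*ε)^2 := by
  nlinarith [Real.neg_one_le_sin (2*p*ε), Real.sin_le_one (2*p*ε)]

lemma Sf_pos (hA : 1 < A) : 0 < Sf A ε p := Real.sqrt_pos.2 (pos_sub hA)

lemma Sf_sq (hA : 1 < A) : Sf A ε p ^ 2 = A^2 - Real.sin (2*p*ε)^2 :=
  Real.sq_sqrt (pos_sub hA).le

lemma Sf_ge (hA : 1 < A) : Real.sqrt (A^2 - 1) ≤ Sf A ε p :=
  Real.sqrt_le_sqrt (by nlinarith [Real.neg_one_le_sin (2*p*ε), Real.sin_le_one (2*p*ε)])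

lemma hasDerivAt_lin : HasDerivAt (fun p : ℝ => 2*p*ε) (2*ε) p := by
  simpa using ((hasDerivAt_id p).const_mul (2:ℝ)).mul_const ε

lemma hasDerivAt_sin2 : HasDerivAt (fun p : ℝ => Real.sin (2*p*ε))
    (Real.cos (2*p*ε) * (2*ε)) p :=
  by have h := (Real.hasDerivAt_sin (2*p*ε)).comp (x := p) (hasDerivAt_lin (ε := ε)); exact h

lemma hasDerivAt_cos2 : HasDerivAt (fun p : ℝ => Real.cos (2*p*ε))
    (-Real.sin (2*p*ε) * (2*ε)) p :=
  by have h := (Real.hasDerivAt_cos (2*p*ε)).comp (x := p) (hasDerivAt_lin (ε := ε)); exact h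

lemma hasDerivAt_Sf (hA : 1 < A) : HasDerivAt (Sf A ε) (Sdf A ε p) p := by
  have hy : HasDerivAt (fun p : ℝ => A^2 - Real.sin (2*p*ε)^2)
      (-(2 * Real.sin (2*p*ε) * (Real.cos (2*p*ε) * (2*ε)))) p := by
    simpa using (hasDerivAt_sin2.pow 2).const_sub (A^2)
  exact (Real.hasDerivAt_sqrt (pos_sub hA).ne').comp (x := p) hy

lemma hasDerivAt_Df (hA : 1 < A) : HasDerivAt (Df A ε) (Ddf A ε p) p :=
  hasDerivAt_cos2.mul (hasDerivAt_Sf hA)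

lemma hasDerivAt_Gf (hA : 1 < A) (hD : Df A ε p ≠ 0) :
    HasDerivAt (Gf A ε t) (Gdf A ε t p) p :=
  (hasDerivAt_const p (A^2/(2*t))).div (hasDerivAt_Df hA) hD

lemma hasDerivAt_phf (hA : 1 < A) (hε : 0 < ε) :
    HasDerivAt (phf A ε) (2*ε*Real.cos (2*p*ε) / Sf A ε p) p := by
  have hA0 : (0:ℝ) < A := lt_trans one_pos hA
  have hr1 : Real.sin (2*p*ε)/A < 1 :=
    (div_lt_one hA0).2 (lt_of_le_of_lt (Real.sin_le_one _) hA)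
  have hr2 : -1 < Real.sin (2*p*ε)/A := by
    rw [lt_div_iff₀ hA0]; nlinarith [Real.neg_one_le_sin (2*p*ε)]
  have h := (Real.hasDerivAt_arcsin hr2.ne' hr1.ne).comp (x := p) (hasDerivAt_sin2.div_const A)
  have hq : Real.sqrt (1 - (Real.sin (2*p*ε)/A)^2) = Sf A ε p / A := by
    rw [show 1 - (Real.sin (2*p*ε)/A)^2 = (A^2 - Real.sin (2*p*ε)^2)/A^2 by
      field_simp]
    rw [Real.sqrt_div (pos_sub hA).le, Real.sqrt_sq hA0.le]
    rfl
  have h2 : HasDerivAt (phf A ε)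
      (1 / Real.sqrt (1 - (Real.sin (2*p*ε)/A)^2) * (Real.cos (2*p*ε) * (2*ε) / A)) p := h
  rw [hq] at h2
  convert h2 using 1
  have hSne : Sf A ε p ≠ 0 := (Sf_pos hA).ne'
  field_simp


lemma hasDerivAt_vf (hA : 1 < A) (hε : 0 < ε) :
    HasDerivAt (vf A ε t) (vdf A ε t p) p :=
  (Real.hasDerivAt_sin _).comp (x := p) ((hasDerivAt_phf hA hε).const_mul (t/ε))

lemma cont_sin2 : Continuous fun p : ℝ => Real.sin (2*p*ε) := by fun_prop

lemma cont_sub : Continuous fun p : ℝ => A^2 - Real.sin (2*p*ε)^2 := by fun_prop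

lemma cont_Sf : Continuous (Sf A ε) := by unfold Sf; fun_prop

lemma cont_Df : Continuous (Df A ε) := by unfold Df Sf; fun_prop

lemma cont_phf (hA : 1 < A) : Continuous (phf A ε) :=
  Real.continuous_arcsin.comp (cont_sin2.div_const A)

lemma cont_Sdf (hA : 1 < A) : Continuous (Sdf A ε) := by
  unfold Sdf
  exact (continuous_const.div (continuous_const.mul cont_Sf)
    (fun q => by
      have := Sf_pos (A := A) (ε := ε) (p := q) hA
      beta_reduce
      exact (mul_pos two_pos this).ne')).mul (by fun_prop)

lemma cont_Ddf (hA : 1 < A) : Continuous (Ddf A ε) := by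
  unfold Ddf
  exact ((cont_sin2.neg.mul continuous_const).mul cont_Sf).add
    ((by fun_prop : Continuous fun p : ℝ => Real.cos (2*p*ε)).mul (cont_Sdf hA))

lemma contOn_Gdf (hA : 1 < A) {s : Set ℝ} (hD : ∀ q ∈ s, Df A ε q ≠ 0) :
    ContinuousOn (Gdf A ε t) s := by
  unfold Gdf
  exact ((continuous_const.mul cont_Df).sub
      (continuous_const.mul (cont_Ddf hA))).continuousOn.div
    ((cont_Df.pow 2).continuousOn) (fun q hq => pow_ne_zero 2 (hD q hq))

lemma Ddf_eq (hA : 1 < A) : Ddf A ε p =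
    -(2*ε*Real.sin (2*p*ε)) * (Sf A ε p + Real.cos (2*p*ε)^2 / Sf A ε p) := by
  have hSne : Sf A ε p ≠ 0 := (Sf_pos hA).ne'
  unfold Ddf Sdf
  field_simp
  ring

lemma Ddf_nonpos (hA : 1 < A) (hε : 0 < ε) (hs : 0 ≤ Real.sin (2*p*ε)) :
    Ddf A ε p ≤ 0 := by
  rw [Ddf_eq hA]
  apply mul_nonpos_of_nonpos_of_nonneg
  · nlinarith
  · have h1 := (Sf_pos (ε := ε) (p := p) hA).le
    positivity

lemma Ddf_nonneg (hA : 1 < A) (hε : 0 < ε) (hs : Real.sin (2*p*ε) ≤ 0) :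
    0 ≤ Ddf A ε p := by
  rw [Ddf_eq hA]
  apply mul_nonneg
  · nlinarith
  · have h1 := (Sf_pos (ε := ε) (p := p) hA).le
    positivity

lemma Gdf_nonneg (hA : 1 < A) (hε : 0 < ε) (ht : 0 < t) (hs : 0 ≤ Real.sin (2*p*ε)) :
    0 ≤ Gdf A ε t p := by
  unfold Gdf
  apply div_nonneg _ (sq_nonneg _)
  have h1 := Ddf_nonpos (p := p) hA hε hs
  have h2 : 0 ≤ A^2/(2*t) := by positivity
  nlinarith

lemma Gdf_nonpos (hA : 1 < A) (hε : 0 < ε) (ht : 0 < t) (hs : Real.sin (2*p*ε) ≤ 0) :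
    Gdf A ε t p ≤ 0 := by
  unfold Gdf
  apply div_nonpos_of_nonpos_of_nonneg _ (sq_nonneg _)
  have h1 := Ddf_nonneg (p := p) hA hε hs
  have h2 : 0 ≤ A^2/(2*t) := by positivity
  nlinarith

lemma Gf_nonneg (hA : 1 < A) (ht : 0 < t) (hc : 0 < Real.cos (2*p*ε)) :
    0 ≤ Gf A ε t p :=
  le_of_lt (div_pos (by positivity) (mul_pos hc (Sf_pos hA)))

lemma Gf_neg : Gf A ε t (-p) = Gf A ε t p := by
  simp [Gf, Df, Sf, show 2*(-p)*ε = -(2*p*ε) from by ring]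

lemma F2_eq_G_vd (hA : 1 < A) (hε : 0 < ε) (ht : t ≠ 0)
    (hc : Real.cos (2*p*ε) ≠ 0) : F2f A ε t p = Gf A ε t p * vdf A ε t p := by
  have hSne : Sf A ε p ≠ 0 := (Sf_pos hA).ne'
  unfold F2f Gf vdf Df
  rw [show A^2 - Real.sin (2*p*ε)^2 = Sf A ε p^2 from (Sf_sq hA).symm]
  field_simp
  ring_nf; rw [mul_inv_cancel_right₀ (by convert hc using 2; ring)]

lemma F2f_bound (hA : 1 < A) : |F2f A ε t p| ≤ A^2/(A^2-1) := by
  unfold F2f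
  rw [abs_mul]
  have h2 : |A^2/(A^2 - Real.sin (2*p*ε)^2)| = A^2/(A^2 - Real.sin (2*p*ε)^2) :=
    abs_of_pos (div_pos (by positivity) (pos_sub hA))
  calc |Real.cos (t/ε * phf A ε p)| * |A^2/(A^2 - Real.sin (2*p*ε)^2)|
      ≤ 1 * |A^2/(A^2 - Real.sin (2*p*ε)^2)| := by
        gcongr; exact Real.abs_cos_le_one _
    _ = A^2/(A^2 - Real.sin (2*p*ε)^2) := by rw [one_mul, h2]
    _ ≤ A^2/(A^2-1) := by
        gcongr
        · nlinarith
        · nlinarith [Real.sin_sq_le_one (2*p*ε)]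

lemma cont_F2f (hA : 1 < A) : Continuous (F2f A ε t) :=
  (Real.continuous_cos.comp (continuous_const.mul (cont_phf hA))).mul
    (continuous_const.div cont_sub fun q => (pos_sub hA).ne')

lemma cont_vf (hA : 1 < A) : Continuous (vf A ε t) :=
  Real.continuous_sin.comp (continuous_const.mul (cont_phf hA))

lemma cont_vdf (hA : 1 < A) : Continuous (vdf A ε t) :=
  (Real.continuous_cos.comp (continuous_const.mul (cont_phf hA))).mul
    (continuous_const.mul (((continuous_const.mul (by fun_prop :
        Continuous fun p : ℝ => Real.cos (2*p*ε)))).div cont_Sf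
      fun q => (Sf_pos hA).ne'))

lemma F_eq (m : ℝ) (hm : 0 < m) (hε : 0 < ε) :
    Real.cos (2 * omg m ε p * t) / (Real.cos (2 * omg m ε p * ε))^2
      = F2f (1 + m^2*ε^2) ε t p := by
  have hA : 1 < 1 + m^2*ε^2 := by
    have : 0 < m^2*ε^2 := by positivity
    linarith
  have hA0 : (0:ℝ) < 1 + m^2*ε^2 := by positivity
  have hP : 0 < (1+m^2*ε^2)^2 - Real.sin (2*p*ε)^2 := pos_sub hA
  have e1 : 2 * omg m ε p * t = t/ε * phf (1+m^2*ε^2) ε p := by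
    unfold omg phf; field_simp
  have e2 : 2 * omg m ε p * ε = phf (1+m^2*ε^2) ε p := by
    unfold omg phf; field_simp
  rw [e1, e2]
  unfold F2f phf
  rw [Real.cos_arcsin, Real.sq_sqrt (by
    rw [div_pow, sub_nonneg, div_le_one (by positivity)]
    nlinarith [Real.sin_sq_le_one (2*p*ε)])]
  rw [show (1:ℝ) - (Real.sin (2*p*ε)/(1+m^2*ε^2))^2
      = ((1+m^2*ε^2)^2 - Real.sin (2*p*ε)^2)/(1+m^2*ε^2)^2 by field_simp]
  rw [div_div_eq_mul_div, mul_div_assoc]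

set_option maxHeartbeats 2000000 in
lemma osc_key (A ε t δ : ℝ) (hA : 1 < A) (hε : 0 < ε) (ht : 0 < t)
    (hδ0 : 0 < δ) (hδb : δ ≤ Real.pi/(4*ε)) :
    |∫ p in (-(Real.pi/(4*ε)))..(Real.pi/(4*ε)), F2f A ε t p|
      ≤ (2*A^2/(A^2-1)) * δ
        + (Real.pi*A^2/(2*ε*Real.sqrt (A^2-1))) / (t*δ) := by
  have hπ := Real.pi_pos
  set b : ℝ := Real.pi/(4*ε) with hbdef
  set c : ℝ := b - δ with hcdef
  have hb0 : 0 < b := by rw [hbdef]; positivity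
  have hbε : 2*b*ε = Real.pi/2 := by rw [hbdef]; field_simp; ring
  have hc0 : 0 ≤ c := by rw [hcdef]; linarith
  have hcb : c ≤ b := by rw [hcdef]; linarith
  have h2c : 2*c*ε = Real.pi/2 - 2*δ*ε := by
    have : 2*c*ε = 2*b*ε - 2*δ*ε := by rw [hcdef]; ring
    rw [this, hbε]
  have hδε2 : 2*δ*ε ≤ Real.pi/2 := by nlinarith
  have hδεpos : 0 < 2*δ*ε := by positivity
  have hsinδ : 0 < Real.sin (2*δ*ε) :=
    Real.sin_pos_of_pos_of_lt_pi hδεpos (by linarith)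
  have hJ : 2/Real.pi * (2*δ*ε) ≤ Real.sin (2*δ*ε) := Real.mul_le_sin hδεpos.le hδε2
  have hB0 : (0:ℝ) < Real.sqrt (A^2-1) := Real.sqrt_pos.2 (by nlinarith)
  -- cosine lower bound on the middle interval
  have hcos : ∀ q ∈ Set.uIcc (-c) c, Real.sin (2*δ*ε) ≤ Real.cos (2*q*ε) := by
    intro q hq
    rw [Set.uIcc_of_le (by linarith)] at hq
    obtain ⟨h1, h2⟩ := hq
    have habs : |2*q*ε| ≤ 2*c*ε := by
      rw [abs_le]; constructor <;> nlinarith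
    calc Real.sin (2*δ*ε) = Real.cos (2*c*ε) := by rw [h2c, Real.cos_pi_div_two_sub]
      _ ≤ Real.cos |2*q*ε| :=
          Real.cos_le_cos_of_nonneg_of_le_pi (abs_nonneg _) (by nlinarith) habs
      _ = Real.cos (2*q*ε) := Real.cos_abs _
  have hcpos : ∀ q ∈ Set.uIcc (-c) c, 0 < Real.cos (2*q*ε) :=
    fun q hq => lt_of_lt_of_le hsinδ (hcos q hq)
  have hDne : ∀ q ∈ Set.uIcc (-c) c, Df A ε q ≠ 0 :=
    fun q hq => (mul_pos (hcpos q hq) (Sf_pos hA)).ne'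
  -- splitting
  have hi : ∀ x y : ℝ, IntervalIntegrable (F2f A ε t) MeasureTheory.volume x y :=
    fun x y => (cont_F2f hA).intervalIntegrable x y
  have hsplit : (∫ p in (-b)..b, F2f A ε t p)
      = (∫ p in (-b)..(-c), F2f A ε t p)
        + ((∫ p in (-c)..c, F2f A ε t p) + (∫ p in c..b, F2f A ε t p)) := by
    rw [integral_add_adjacent_intervals (hi (-c) c) (hi c b),
        integral_add_adjacent_intervals (hi (-b) (-c)) (hi (-c) b)]
  -- end piece bound
  have hM : ∀ (x y : ℝ), |∫ p in x..y, F2f A ε t p| ≤ (A^2/(A^2-1)) * |y - x| := by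
    intro x y
    have := intervalIntegral.norm_integral_le_of_norm_le_const
      (C := A^2/(A^2-1)) (f := F2f A ε t) (a := x) (b := y)
      (fun q _ => by rw [Real.norm_eq_abs]; exact F2f_bound hA)
    simpa [Real.norm_eq_abs] using this
  -- integration by parts on the middle
  have hGdc : ContinuousOn (Gdf A ε t) (Set.uIcc (-c) c) := contOn_Gdf hA hDne
  have hibp : (∫ p in (-c)..c, F2f A ε t p)
      = Gf A ε t c * vf A ε t c - Gf A ε t (-c) * vf A ε t (-c)
        - ∫ p in (-c)..c, Gdf A ε t p * vf A ε t p := by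
    rw [intervalIntegral.integral_congr
      (g := fun p => Gf A ε t p * vdf A ε t p)
      (fun q hq => F2_eq_G_vd hA hε ht.ne' (hcpos q hq).ne')]
    exact intervalIntegral.integral_mul_deriv_eq_deriv_mul
      (fun q hq => hasDerivAt_Gf hA (hDne q hq))
      (fun q _ => hasDerivAt_vf hA hε)
      (hGdc.intervalIntegrable)
      ((cont_vdf hA).intervalIntegrable _ _)
  -- subinterval inclusions
  have hIcc : Set.uIcc (-c) c = Set.Icc (-c) c := Set.uIcc_of_le (by linarith)
  have hsub1 : Set.uIcc (0:ℝ) c ⊆ Set.uIcc (-c) c := by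
    rw [hIcc, Set.uIcc_of_le hc0]
    exact Set.Icc_subset_Icc (by linarith) le_rfl
  have hsub2 : Set.uIcc (-c) (0:ℝ) ⊆ Set.uIcc (-c) c := by
    rw [hIcc, Set.uIcc_of_le (by linarith : -c ≤ (0:ℝ))]
    exact Set.Icc_subset_Icc le_rfl hc0
  -- FTC on the two halves
  have hFTC1 : ∫ p in (0:ℝ)..c, Gdf A ε t p = Gf A ε t c - Gf A ε t 0 :=
    intervalIntegral.integral_eq_sub_of_hasDerivAt
      (fun q hq => hasDerivAt_Gf hA (hDne q (hsub1 hq)))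
      ((hGdc.mono hsub1).intervalIntegrable)
  have hFTC2 : ∫ p in (-c)..(0:ℝ), Gdf A ε t p = Gf A ε t 0 - Gf A ε t (-c) :=
    intervalIntegral.integral_eq_sub_of_hasDerivAt
      (fun q hq => hasDerivAt_Gf hA (hDne q (hsub2 hq)))
      ((hGdc.mono hsub2).intervalIntegrable)
  -- signs of Gdf on the halves
  have hsin1 : ∀ q ∈ Set.uIcc (0:ℝ) c, 0 ≤ Real.sin (2*q*ε) := by
    intro q hq
    rw [Set.uIcc_of_le hc0] at hq
    obtain ⟨h1, h2⟩ := hq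
    exact Real.sin_nonneg_of_nonneg_of_le_pi (by positivity) (by nlinarith)
  have hsin2 : ∀ q ∈ Set.uIcc (-c) (0:ℝ), Real.sin (2*q*ε) ≤ 0 := by
    intro q hq
    rw [Set.uIcc_of_le (by linarith : -c ≤ (0:ℝ))] at hq
    obtain ⟨h1, h2⟩ := hq
    have : Real.sin (-(2*q*ε)) ≥ 0 :=
      Real.sin_nonneg_of_nonneg_of_le_pi (by nlinarith) (by nlinarith)
    rw [Real.sin_neg] at this
    linarith
  -- |Gdf| integrals
  have habs1 : ∫ p in (0:ℝ)..c, |Gdf A ε t p| = Gf A ε t c - Gf A ε t 0 := by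
    rw [intervalIntegral.integral_congr (g := Gdf A ε t)
      (fun q hq => abs_of_nonneg (Gdf_nonneg hA hε ht (hsin1 q hq))), hFTC1]
  have habs2 : ∫ p in (-c)..(0:ℝ), |Gdf A ε t p| = Gf A ε t (-c) - Gf A ε t 0 := by
    rw [intervalIntegral.integral_congr (g := fun p => -(Gdf A ε t p))
      (fun q hq => abs_of_nonpos (Gdf_nonpos hA hε ht (hsin2 q hq))),
      intervalIntegral.integral_neg, hFTC2]
    ring
  have hGc0 : 0 ≤ Gf A ε t c :=
    Gf_nonneg hA ht (hcpos c (Set.right_mem_uIcc))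
  have hG00 : 0 ≤ Gf A ε t 0 := by
    apply Gf_nonneg hA ht
    apply hcpos 0
    rw [hIcc]; exact ⟨by linarith, hc0⟩
  -- bound on ∫ |Gdf * vf|
  have hGdabs : |∫ p in (-c)..c, Gdf A ε t p * vf A ε t p| ≤ 2 * Gf A ε t c := by
    have h1 : |∫ p in (-c)..c, Gdf A ε t p * vf A ε t p|
        ≤ ∫ p in (-c)..c, |Gdf A ε t p * vf A ε t p| :=
      intervalIntegral.abs_integral_le_integral_abs (by linarith)
    have h2 : (∫ p in (-c)..c, |Gdf A ε t p * vf A ε t p|)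
        ≤ ∫ p in (-c)..c, |Gdf A ε t p| := by
      apply intervalIntegral.integral_mono_on (by linarith)
      · exact ((hGdc.mono (by rw [hIcc])).mul ((cont_vf hA).continuousOn)).abs.intervalIntegrable |>.mono_set (by rw [hIcc])
      · exact (hGdc.abs.intervalIntegrable)
      · intro q hq
        rw [abs_mul]
        exact mul_le_of_le_one_right (abs_nonneg _) (Real.abs_sin_le_one _)
    have h3 : (∫ p in (-c)..c, |Gdf A ε t p|)
        = (Gf A ε t (-c) - Gf A ε t 0) + (Gf A ε t c - Gf A ε t 0) := by
      rw [← integral_add_adjacent_intervals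
        ((hGdc.mono hsub2).intervalIntegrable.abs)
        ((hGdc.mono hsub1).intervalIntegrable.abs), habs1, habs2]
    have h4 : Gf A ε t (-c) = Gf A ε t c := Gf_neg
    calc |∫ p in (-c)..c, Gdf A ε t p * vf A ε t p|
        ≤ ∫ p in (-c)..c, |Gdf A ε t p| := le_trans h1 h2
      _ = (Gf A ε t (-c) - Gf A ε t 0) + (Gf A ε t c - Gf A ε t 0) := h3
      _ ≤ 2 * Gf A ε t c := by rw [h4]; linarith
  -- bound on Gf c
  have hcosc : Real.cos (2*c*ε) = Real.sin (2*δ*ε) := by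
    rw [h2c, Real.cos_pi_div_two_sub]
  have hDc : (2/Real.pi*(2*δ*ε)) * Real.sqrt (A^2-1) ≤ Df A ε c := by
    unfold Df
    apply mul_le_mul _ (Sf_ge hA) hB0.le _
    · rw [hcosc]; exact hJ
    · rw [hcosc]; exact hsinδ.le
  have hDcpos : (0:ℝ) < (2/Real.pi*(2*δ*ε)) * Real.sqrt (A^2-1) := by positivity
  have hGcb : Gf A ε t c ≤ (A^2/(2*t)) / ((2/Real.pi*(2*δ*ε)) * Real.sqrt (A^2-1)) := by
    unfold Gf
    gcongr
  -- middle bound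
  have hvabs : ∀ q : ℝ, |vf A ε t q| ≤ 1 := fun q => Real.abs_sin_le_one (t/ε * phf A ε q)
  have hmid : |∫ p in (-c)..c, F2f A ε t p|
      ≤ (Real.pi*A^2/(2*ε*Real.sqrt (A^2-1))) / (t*δ) := by
    rw [hibp]
    have e1 : |Gf A ε t c * vf A ε t c| ≤ Gf A ε t c := by
      rw [abs_mul, abs_of_nonneg hGc0]
      exact mul_le_of_le_one_right hGc0 (hvabs c)
    have e2 : |Gf A ε t (-c) * vf A ε t (-c)| ≤ Gf A ε t c := by
      rw [abs_mul, Gf_neg, abs_of_nonneg hGc0]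
      exact mul_le_of_le_one_right hGc0 (hvabs (-c))
    have e4 : 4 * ((A^2/(2*t)) / ((2/Real.pi*(2*δ*ε)) * Real.sqrt (A^2-1)))
        = (Real.pi*A^2/(2*ε*Real.sqrt (A^2-1))) / (t*δ) := by
      field_simp
      ring
    calc |Gf A ε t c * vf A ε t c - Gf A ε t (-c) * vf A ε t (-c)
          - ∫ p in (-c)..c, Gdf A ε t p * vf A ε t p|
        ≤ |Gf A ε t c * vf A ε t c| + |Gf A ε t (-c) * vf A ε t (-c)|
          + |∫ p in (-c)..c, Gdf A ε t p * vf A ε t p| := by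
          have h₁ := abs_sub (Gf A ε t c * vf A ε t c - Gf A ε t (-c) * vf A ε t (-c))
            (∫ p in (-c)..c, Gdf A ε t p * vf A ε t p)
          have h₂ := abs_sub (Gf A ε t c * vf A ε t c) (Gf A ε t (-c) * vf A ε t (-c))
          linarith
      _ ≤ Gf A ε t c + Gf A ε t c + 2 * Gf A ε t c := by
          gcongr
      _ = 4 * Gf A ε t c := by ring
      _ ≤ 4 * ((A^2/(2*t)) / ((2/Real.pi*(2*δ*ε)) * Real.sqrt (A^2-1))) := by linarith
      _ = (Real.pi*A^2/(2*ε*Real.sqrt (A^2-1))) / (t*δ) := e4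
  -- assemble
  calc |∫ p in (-b)..b, F2f A ε t p|
      ≤ |∫ p in (-b)..(-c), F2f A ε t p| + (|∫ p in (-c)..c, F2f A ε t p|
          + |∫ p in c..b, F2f A ε t p|) := by
        rw [hsplit]; exact (abs_add_le _ _).trans (by gcongr; exact abs_add_le _ _)
    _ ≤ (A^2/(A^2-1)) * δ + ((Real.pi*A^2/(2*ε*Real.sqrt (A^2-1))) / (t*δ)
          + (A^2/(A^2-1)) * δ) := by
        have hend1 : |∫ p in (-b)..(-c), F2f A ε t p| ≤ (A^2/(A^2-1)) * δ := by
          calc |∫ p in (-b)..(-c), F2f A ε t p| ≤ (A^2/(A^2-1)) * |(-c) - (-b)| := hM _ _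
            _ = (A^2/(A^2-1)) * δ := by
              rw [show (-c) - (-b) = δ by rw [hcdef]; ring, abs_of_pos hδ0]
        have hend2 : |∫ p in c..b, F2f A ε t p| ≤ (A^2/(A^2-1)) * δ := by
          calc |∫ p in c..b, F2f A ε t p| ≤ (A^2/(A^2-1)) * |b - c| := hM _ _
            _ = (A^2/(A^2-1)) * δ := by
              rw [show b - c = δ by rw [hcdef]; ring, abs_of_pos hδ0]
        exact add_le_add hend1 (add_le_add hmid hend2)
    _ = (2*A^2/(A^2-1)) * δ + (Real.pi*A^2/(2*ε*Real.sqrt (A^2-1))) / (t*δ) := by ring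

lemma osc_triv (A ε t : ℝ) (hA : 1 < A) (hε : 0 < ε) :
    |∫ p in (-(Real.pi/(4*ε)))..(Real.pi/(4*ε)), F2f A ε t p|
      ≤ (A^2/(A^2-1)) * (Real.pi/(2*ε)) := by
  have hπ := Real.pi_pos
  have h := intervalIntegral.norm_integral_le_of_norm_le_const
    (C := A^2/(A^2-1)) (f := F2f A ε t) (a := -(Real.pi/(4*ε))) (b := Real.pi/(4*ε))
    (fun q _ => by rw [Real.norm_eq_abs]; exact F2f_bound hA)
  rw [Real.norm_eq_abs] at h
  calc |∫ p in (-(Real.pi/(4*ε)))..(Real.pi/(4*ε)), F2f A ε t p|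
      ≤ A^2/(A^2-1) * |Real.pi/(4*ε) - -(Real.pi/(4*ε))| := h
    _ = (A^2/(A^2-1)) * (Real.pi/(2*ε)) := by
        rw [show Real.pi/(4*ε) - -(Real.pi/(4*ε)) = Real.pi/(2*ε) by field_simp; ring]
        rw [abs_of_pos (by positivity)]

lemma osc_main (m ε : ℝ) (hm : 0 < m) (hε : 0 < ε) :
    ∃ C : ℝ, 0 < C ∧ ∀ t : ℝ, 0 < t →
      |∫ p in (-(Real.pi / (4 * ε)))..(Real.pi / (4 * ε)),
          Real.cos (2 * omg m ε p * t) / (Real.cos (2 * omg m ε p * ε)) ^ 2|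
        ≤ C * t ^ (-(1 / 3) : ℝ) := by
  have hπ := Real.pi_pos
  have hA : 1 < 1 + m^2*ε^2 := by
    have : 0 < m^2*ε^2 := by positivity
    linarith
  set A : ℝ := 1 + m^2*ε^2 with hAdef
  set b : ℝ := Real.pi/(4*ε) with hbdef
  have hb0 : 0 < b := by rw [hbdef]; positivity
  set B : ℝ := Real.sqrt (A^2-1) with hBdef
  have hB0 : 0 < B := Real.sqrt_pos.2 (by nlinarith)
  set C1 : ℝ := 2*A^2/(A^2-1) with hC1def
  set C2 : ℝ := Real.pi*A^2/(2*ε*B) with hC2def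
  set M : ℝ := (A^2/(A^2-1)) * (Real.pi/(2*ε)) with hMdef
  have hC10 : 0 < C1 := by rw [hC1def]; apply div_pos (by positivity) (by nlinarith)
  have hC20 : 0 < C2 := by rw [hC2def]; positivity
  have hM0 : 0 < M := by
    rw [hMdef]; apply mul_pos (div_pos (by positivity) (by nlinarith)) (by positivity)
  have hbr0 : 0 < b ^ ((1:ℝ)/2) := Real.rpow_pos_of_pos hb0 _
  refine ⟨C1 * b^((1:ℝ)/2) + C2 + M / b^((1:ℝ)/2), by positivity, ?_⟩
  intro t ht
  have ht3 : 0 < t ^ (-(1/3) : ℝ) := Real.rpow_pos_of_pos ht _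
  have hIeq : (∫ p in (-b)..b,
      Real.cos (2 * omg m ε p * t) / (Real.cos (2 * omg m ε p * ε)) ^ 2)
      = ∫ p in (-b)..b, F2f A ε t p :=
    intervalIntegral.integral_congr (fun p _ => F_eq m hm hε)
  rw [hIeq]
  by_cases hcase : t ^ (-(2:ℝ)/3) ≤ b
  · -- large t: use key with δ = t^(-2/3)
    have hδ0 : 0 < t ^ (-(2:ℝ)/3) := Real.rpow_pos_of_pos ht _
    have hk := osc_key A ε t (t ^ (-(2:ℝ)/3)) hA hε ht hδ0 hcase
    have e5 : t * t ^ (-(2:ℝ)/3) = t ^ ((1:ℝ)/3) := by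
      nth_rewrite 1 [← Real.rpow_one t]
      rw [← Real.rpow_add ht]; norm_num
    have e6 : C2 / (t * t ^ (-(2:ℝ)/3)) = C2 * t ^ (-(1/3) : ℝ) := by
      rw [e5, div_eq_mul_inv, ← Real.rpow_neg ht.le]
    have e7 : t ^ (-(2:ℝ)/3) = t ^ (-(1/3) : ℝ) * t ^ (-(1/3) : ℝ) := by
      rw [← Real.rpow_add ht]; norm_num
    have e8 : t ^ (-(1/3) : ℝ) ≤ b ^ ((1:ℝ)/2) := by
      have h1 : (t ^ (-(2:ℝ)/3)) ^ ((1:ℝ)/2) ≤ b ^ ((1:ℝ)/2) :=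
        Real.rpow_le_rpow hδ0.le hcase (by norm_num)
      rw [← Real.rpow_mul ht.le] at h1
      norm_num at h1
      convert h1 using 2 <;> norm_num
    calc |∫ p in (-b)..b, F2f A ε t p|
        ≤ C1 * t ^ (-(2:ℝ)/3) + C2 / (t * t ^ (-(2:ℝ)/3)) := hk
      _ = C1 * (t ^ (-(1/3) : ℝ) * t ^ (-(1/3) : ℝ)) + C2 * t ^ (-(1/3) : ℝ) := by
          rw [e6, e7]
      _ ≤ C1 * (b ^ ((1:ℝ)/2) * t ^ (-(1/3) : ℝ)) + C2 * t ^ (-(1/3) : ℝ) := by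
          gcongr
      _ = (C1 * b^((1:ℝ)/2) + C2) * t ^ (-(1/3) : ℝ) := by ring
      _ ≤ (C1 * b^((1:ℝ)/2) + C2 + M / b^((1:ℝ)/2)) * t ^ (-(1/3) : ℝ) := by
          apply mul_le_mul_of_nonneg_right _ ht3.le
          have : 0 < M / b^((1:ℝ)/2) := by positivity
          linarith
  · -- small t: trivial bound
    push_neg at hcase
    have e9 : b ^ ((1:ℝ)/2) ≤ t ^ (-(1/3) : ℝ) := by
      have h1 : b ^ ((1:ℝ)/2) ≤ (t ^ (-(2:ℝ)/3)) ^ ((1:ℝ)/2) :=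
        Real.rpow_le_rpow hb0.le hcase.le (by norm_num)
      rw [← Real.rpow_mul ht.le] at h1
      convert h1 using 2 <;> norm_num
    calc |∫ p in (-b)..b, F2f A ε t p|
        ≤ M := osc_triv A ε t hA hε
      _ = (M / b^((1:ℝ)/2)) * b^((1:ℝ)/2) := by
          rw [div_mul_cancel₀ _ hbr0.ne']
      _ ≤ (M / b^((1:ℝ)/2)) * t ^ (-(1/3) : ℝ) := by
          apply mul_le_mul_of_nonneg_left e9 (by positivity)
      _ ≤ (C1 * b^((1:ℝ)/2) + C2 + M / b^((1:ℝ)/2)) * t ^ (-(1/3) : ℝ) := by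
          apply mul_le_mul_of_nonneg_right _ ht3.le
          nlinarith

end OscAux

/-- Lemma (stationary-phase type estimate for the oscillatory integral). -/
theorem oscillatory_integral_estimate (m ε : ℝ) (hm : 0 < m) (hε : 0 < ε) :
    ∃ C : ℝ, 0 < C ∧ ∀ t : ℝ, 0 < t →
      |∫ p in (-(Real.pi / (4 * ε)))..(Real.pi / (4 * ε)),
          Real.cos (2 * omg m ε p * t) / (Real.cos (2 * omg m ε p * ε)) ^ 2|
        ≤ C * t ^ (-(1 / 3) : ℝ) := by
  exact osc_main m ε hm hε
end

section
/- Let m > 0 and let x, t be real numbers with |x| < t. Then for every ε with 0 < ε ≤ min{ 8/(m²(x+t)), (x+t)/4, (t−x)/4 }, setting A := ⌊x/(4ε)⌋ + ⌊t/(4ε)⌋ and B := ⌊t/(4ε)⌋ − ⌊x/(4ε)⌋, for every integer j ≥ 0 one has C(A−1, j)·C(B−1, j)·(2+(mε)²)^j·(mε)^{2j} ≤ (x+t)^j·(t−x)^j·m^{2j} / (2^{3j}·(j!)²). -/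
open scoped BigOperators

lemma binom_aux (j : ℕ) (a b p q f : ℝ) (hf : f ≠ 0) :
    (a ^ j / f) * (b ^ j / f) * p ^ j * q ^ j = (a * b * p * q) ^ j / f ^ 2 := by
  rw [mul_pow, mul_pow, mul_pow, sq]
  field_simp

set_option maxHeartbeats 1000000 in
/-- Lemma (binomial product bound for small `ε`). -/
theorem binomial_product_bound (m x t : ℝ) (hm : 0 < m) (hxt : |x| < t) :
    ∀ ε : ℝ, 0 < ε →
      ε ≤ min (min (8 / (m ^ 2 * (x + t))) ((x + t) / 4)) ((t - x) / 4) →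
      ∀ j : ℕ,
        (zchoose (⌊x / (4 * ε)⌋ + ⌊t / (4 * ε)⌋ - 1) (j : ℤ) : ℝ)
            * (zchoose (⌊t / (4 * ε)⌋ - ⌊x / (4 * ε)⌋ - 1) (j : ℤ) : ℝ)
            * (2 + (m * ε) ^ 2) ^ j * (m * ε) ^ (2 * j)
          ≤ (x + t) ^ j * (t - x) ^ j * m ^ (2 * j)
            / (2 ^ (3 * j) * ((j.factorial : ℝ)) ^ 2) := by
  intro ε hε hεle j
  have hx2 : x < t := lt_of_abs_lt hxt
  have hx1 : -t < x := neg_lt_of_abs_lt hxt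
  have hxtp : 0 < x + t := by linarith
  have htxp : 0 < t - x := by linarith
  have h1 : ε ≤ 8 / (m ^ 2 * (x + t)) :=
    le_trans hεle (le_trans (min_le_left _ _) (min_le_left _ _))
  have hme : m ^ 2 * (x + t) * ε ≤ 8 := by
    rw [le_div_iff₀ (by positivity)] at h1; linarith
  have hRHS : (0:ℝ) ≤ (x + t) ^ j * (t - x) ^ j * m ^ (2 * j)
      / (2 ^ (3 * j) * ((j.factorial : ℝ)) ^ 2) := by positivity
  set A : ℤ := ⌊x / (4 * ε)⌋ + ⌊t / (4 * ε)⌋ with hAdef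
  set B : ℤ := ⌊t / (4 * ε)⌋ - ⌊x / (4 * ε)⌋ with hBdef
  have hPpos : (0:ℝ) < 2 + (m * ε) ^ 2 := by positivity
  by_cases hA1 : 1 ≤ A
  swap
  · have hz : zchoose (A - 1) (j : ℤ) = 0 := by
      unfold zchoose; rw [if_neg]; rintro ⟨h, -⟩; omega
    rw [hz]
    simpa using hRHS
  by_cases hB1 : 1 ≤ B
  swap
  · have hz : zchoose (B - 1) (j : ℤ) = 0 := by
      unfold zchoose; rw [if_neg]; rintro ⟨h, -⟩; omega
    rw [hz]
    simpa using hRHS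
  -- main case
  have h4ε : (0:ℝ) < 4 * ε := by linarith
  have hc1 : ((zchoose (A - 1) (j : ℤ) : ℤ) : ℝ) = ((A - 1).toNat.choose j : ℝ) := by
    unfold zchoose
    rw [if_pos ⟨by omega, Int.ofNat_nonneg j⟩, Int.toNat_natCast]; push_cast; ring
  have hc2 : ((zchoose (B - 1) (j : ℤ) : ℤ) : ℝ) = ((B - 1).toNat.choose j : ℝ) := by
    unfold zchoose
    rw [if_pos ⟨by omega, Int.ofNat_nonneg j⟩, Int.toNat_natCast]; push_cast; ring
  have hA0 : ((A - 1).toNat : ℝ) = (A : ℝ) - 1 := by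
    have h := Int.toNat_of_nonneg (show (0:ℤ) ≤ A - 1 by omega)
    calc ((A - 1).toNat : ℝ) = (((A - 1).toNat : ℤ) : ℝ) := by norm_cast
      _ = ((A - 1 : ℤ) : ℝ) := by rw [h]
      _ = (A : ℝ) - 1 := by push_cast; ring
  have hB0 : ((B - 1).toNat : ℝ) = (B : ℝ) - 1 := by
    have h := Int.toNat_of_nonneg (show (0:ℤ) ≤ B - 1 by omega)
    calc ((B - 1).toNat : ℝ) = (((B - 1).toNat : ℤ) : ℝ) := by norm_cast
      _ = ((B - 1 : ℤ) : ℝ) := by rw [h]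
      _ = (B : ℝ) - 1 := by push_cast; ring
  have hA0' : (0:ℝ) ≤ (A : ℝ) - 1 := by
    rw [← hA0]; positivity
  have hB0' : (0:ℝ) ≤ (B : ℝ) - 1 := by
    rw [← hB0]; positivity
  -- floor bounds
  have hfx : (⌊x / (4 * ε)⌋ : ℝ) ≤ x / (4 * ε) := Int.floor_le _
  have hft : (⌊t / (4 * ε)⌋ : ℝ) ≤ t / (4 * ε) := Int.floor_le _
  have hfx' : x / (4 * ε) - 1 < (⌊x / (4 * ε)⌋ : ℝ) := Int.sub_one_lt_floor _
  have hAle : (A : ℝ) ≤ (x + t) / (4 * ε) := by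
    push_cast [hAdef]
    rw [add_div]
    exact add_le_add hfx hft
  have hBle : (B : ℝ) - 1 ≤ (t - x) / (4 * ε) := by
    push_cast [hBdef]
    rw [sub_div]
    linarith
  clear_value A B
  have hab : (x + t) / (4 * ε) * (m * ε) ^ 2 ≤ 2 := by
    rw [div_mul_eq_mul_div, div_le_iff₀ h4ε]
    nlinarith [sq_nonneg ε, hε]
  have step1 : ((A : ℝ) - 1) * (2 + (m * ε) ^ 2) ≤ 2 * ((x + t) / (4 * ε)) := by
    nlinarith [sq_nonneg (m * ε), hA0', hAle, hab, hPpos]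
  have base : ((A : ℝ) - 1) * ((B : ℝ) - 1) * (2 + (m * ε) ^ 2) * (m * ε) ^ 2
      ≤ (x + t) * (t - x) * m ^ 2 / 8 := by
    have h2 : ((A : ℝ) - 1) * (2 + (m * ε) ^ 2) * (((B : ℝ) - 1) * (m * ε) ^ 2)
        ≤ 2 * ((x + t) / (4 * ε)) * ((t - x) / (4 * ε) * (m * ε) ^ 2) := by
      apply mul_le_mul step1 _ (by positivity) (by positivity)
      exact mul_le_mul_of_nonneg_right hBle (by positivity)
    calc ((A : ℝ) - 1) * ((B : ℝ) - 1) * (2 + (m * ε) ^ 2) * (m * ε) ^ 2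
        = ((A : ℝ) - 1) * (2 + (m * ε) ^ 2) * (((B : ℝ) - 1) * (m * ε) ^ 2) := by ring
      _ ≤ 2 * ((x + t) / (4 * ε)) * ((t - x) / (4 * ε) * (m * ε) ^ 2) := h2
      _ = (x + t) * (t - x) * m ^ 2 / 8 := by field_simp; ring
  have basenn : (0:ℝ) ≤ ((A : ℝ) - 1) * ((B : ℝ) - 1) * (2 + (m * ε) ^ 2) * (m * ε) ^ 2 := by
    positivity
  have hfac : (0:ℝ) < ((j.factorial : ℝ)) := by positivity
  calc (zchoose (A - 1) (j : ℤ) : ℝ) * (zchoose (B - 1) (j : ℤ) : ℝ)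
          * (2 + (m * ε) ^ 2) ^ j * (m * ε) ^ (2 * j)
      ≤ (((A : ℝ) - 1) ^ j / j.factorial) * (((B : ℝ) - 1) ^ j / j.factorial)
          * (2 + (m * ε) ^ 2) ^ j * (m * ε) ^ (2 * j) := by
        rw [hc1, hc2]
        have b1 : ((A - 1).toNat.choose j : ℝ) ≤ ((A : ℝ) - 1) ^ j / j.factorial := by
          rw [← hA0]; exact_mod_cast Nat.choose_le_pow_div j (A - 1).toNat
        have b2 : ((B - 1).toNat.choose j : ℝ) ≤ ((B : ℝ) - 1) ^ j / j.factorial := by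
          rw [← hB0]; exact_mod_cast Nat.choose_le_pow_div j (B - 1).toNat
        apply mul_le_mul_of_nonneg_right _ (by positivity)
        apply mul_le_mul_of_nonneg_right _ (by positivity)
        exact mul_le_mul b1 b2 (by positivity) (by positivity)
    _ = (((A : ℝ) - 1) * ((B : ℝ) - 1) * (2 + (m * ε) ^ 2) * (m * ε) ^ 2) ^ j
          / ((j.factorial : ℝ)) ^ 2 := by
        rw [pow_mul]
        exact binom_aux j _ _ _ _ _ (by positivity)
    _ ≤ ((x + t) * (t - x) * m ^ 2 / 8) ^ j / ((j.factorial : ℝ)) ^ 2 := by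
        gcongr
    _ = (x + t) ^ j * (t - x) ^ j * m ^ (2 * j)
          / (2 ^ (3 * j) * ((j.factorial : ℝ)) ^ 2) := by
        rw [pow_mul m, show (2:ℝ)^(3*j) = 8^j from by rw [pow_mul]; norm_num,
          div_pow, mul_pow, mul_pow, div_div]
end
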